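/- arXiv:1603.08596 — 4 statements merged into one kernel-verified Lean document; each statement's English description precedes it below -/
import Mathlib

section
/- For n ≥ 2, the number c_n of connected chord diagrams with n chords satisfies c_n = (n-1) · Σ_{k=1}^{n-1} c_k · c_{n-k}, with c_1 = 1. -/
open scoped Classical

namespace ChordStmt

/-- Chord `p` has an outgoing edge to chord `q` in the oriented intersection graph. -/
def crosses (p q : ℕ × ℕ) : Prop := p.1 < q.1 ∧ q.1 < p.2 ∧ p.2 < q.2

/-- A finite set of pairs `(a,b)` with `a < b` and all endpoints distinct. -/
def IsMatching (D : Finset (ℕ × ℕ)) : Prop :=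
  (∀ p ∈ D, p.1 < p.2) ∧
  ∀ p ∈ D, ∀ q ∈ D, p ≠ q → p.1 ≠ q.1 ∧ p.1 ≠ q.2 ∧ p.2 ≠ q.1 ∧ p.2 ≠ q.2

def points (D : Finset (ℕ × ℕ)) : Finset ℕ := D.biUnion fun p => {p.1, p.2}

/-- A chord diagram with `n` chords: a perfect matching of `{1, …, 2n}`. -/
def IsDiagramOn (n : ℕ) (D : Finset (ℕ × ℕ)) : Prop :=
  IsMatching D ∧ points D = Finset.Icc 1 (2 * n)

def Step (D : Finset (ℕ × ℕ)) (a b : ℕ × ℕ) : Prop :=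
  a ∈ D ∧ b ∈ D ∧ (crosses a b ∨ crosses b a)

def Reach (D : Finset (ℕ × ℕ)) (a b : ℕ × ℕ) : Prop :=
  Relation.ReflTransGen (Step D) a b

/-- The diagram is connected (its intersection graph is connected). -/
def ConnectedDiagram (D : Finset (ℕ × ℕ)) : Prop :=
  D.Nonempty ∧ ∀ p ∈ D, ∀ q ∈ D, Reach D p q

/-- A chord is terminal if it has no outgoing edge in the oriented intersection graph. -/
def IsTerminal (D : Finset (ℕ × ℕ)) (p : ℕ × ℕ) : Prop :=
  p ∈ D ∧ ∀ q ∈ D, ¬ crosses p q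

/-- The number of connected chord diagrams with `n` chords. -/
noncomputable def c (n : ℕ) : ℕ :=
  Set.ncard {D : Finset (ℕ × ℕ) | IsDiagramOn n D ∧ ConnectedDiagram D}

/-- The root chord: the chord with the smallest first endpoint. -/
noncomputable def rootChord (D : Finset (ℕ × ℕ)) : ℕ × ℕ :=
  if h : ∃ p ∈ D, ∀ q ∈ D, p.1 ≤ q.1 then h.choose else (0, 0)

lemma rootChord_mem {D : Finset (ℕ × ℕ)} (h : D.Nonempty) : rootChord D ∈ D := by
  have hex : ∃ p ∈ D, ∀ q ∈ D, p.1 ≤ q.1 := by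
    obtain ⟨p, hp, hmin⟩ := D.exists_min_image Prod.fst h
    exact ⟨p, hp, hmin⟩
  rw [rootChord, dif_pos hex]
  exact hex.choose_spec.1

/-- The connected component of the chord `p` in the diagram `D`. -/
noncomputable def componentOf (D : Finset (ℕ × ℕ)) (p : ℕ × ℕ) : Finset (ℕ × ℕ) :=
  D.filter fun q => Reach D p q

/-- The list of chords of `D` in intersection order: the root chord first, then
recursively the chords of the connected components of `D` minus the root chord,
components ordered by first vertex (equivalently: repeatedly split off the component
of the current root chord). -/
noncomputable def interOrder (D : Finset (ℕ × ℕ)) : List (ℕ × ℕ) :=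
  if h : D.Nonempty then
    if hK : componentOf D (rootChord D) = D then
      rootChord D :: interOrder (D.erase (rootChord D))
    else
      interOrder (componentOf D (rootChord D)) ++
        interOrder (D \ componentOf D (rootChord D))
  else []
termination_by D.card
decreasing_by
  · exact Finset.card_erase_lt_of_mem (rootChord_mem h)
  · exact Finset.card_lt_card
      (Finset.ssubset_iff_subset_ne.mpr ⟨Finset.filter_subset _ _, hK⟩)
  · exact Finset.card_lt_card
      (Finset.sdiff_ssubset (Finset.filter_subset _ _)
        ⟨rootChord D, Finset.mem_filter.mpr ⟨rootChord_mem h, Relation.ReflTransGen.refl⟩⟩)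

/-- `b(C)`: the (1-based) index of the first terminal chord in the intersection order. -/
noncomputable def bIndex (D : Finset (ℕ × ℕ)) : ℕ :=
  (interOrder D).findIdx (fun p => decide (IsTerminal D p)) + 1

/-- `b_{n,k}`: the number of connected chord diagrams `C` with `n` chords and `b(C) ≥ n - k`. -/
noncomputable def bCount (n k : ℕ) : ℕ :=
  Set.ncard {D : Finset (ℕ × ℕ) |
    IsDiagramOn n D ∧ ConnectedDiagram D ∧ n - k ≤ bIndex D}

/-- The terminal chords of `D` are exactly the last `k` chords in intersection order. -/
def TerminalExactlyLast (D : Finset (ℕ × ℕ)) (k : ℕ) : Prop :=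
  ∀ i : Fin (interOrder D).length,
    IsTerminal D ((interOrder D).get i) ↔ (interOrder D).length - k ≤ (i : ℕ)

/-- `o_{n,k}`: connected diagrams with `n` chords whose terminal chords are exactly
the last `k` chords in intersection order. -/
noncomputable def oCount (n k : ℕ) : ℕ :=
  Set.ncard {D : Finset (ℕ × ℕ) |
    IsDiagramOn n D ∧ ConnectedDiagram D ∧ TerminalExactlyLast D k}

end ChordStmt


namespace ChordStmt

lemma step_symm {D : Finset (ℕ × ℕ)} {a b : ℕ × ℕ} (h : Step D a b) : Step D b a :=
  ⟨h.2.1, h.1, h.2.2.symm⟩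

lemma reach_symm {D : Finset (ℕ × ℕ)} {a b : ℕ × ℕ} (h : Reach D a b) : Reach D b a := by
  induction h with
  | refl => exact Relation.ReflTransGen.refl
  | tail _ hstep ih => exact Relation.ReflTransGen.head (step_symm hstep) ih

lemma reach_mono {D E : Finset (ℕ × ℕ)} (hDE : D ⊆ E) {a b : ℕ × ℕ}
    (h : Reach D a b) : Reach E a b := by
  induction h with
  | refl => exact Relation.ReflTransGen.refl
  | tail _ hstep ih => exact ih.tail ⟨hDE hstep.1, hDE hstep.2.1, hstep.2.2⟩

lemma fst_mem_points {D : Finset (ℕ × ℕ)} {p : ℕ × ℕ} (hp : p ∈ D) : p.1 ∈ points D :=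
  Finset.mem_biUnion.mpr ⟨p, hp, by simp⟩

lemma snd_mem_points {D : Finset (ℕ × ℕ)} {p : ℕ × ℕ} (hp : p ∈ D) : p.2 ∈ points D :=
  Finset.mem_biUnion.mpr ⟨p, hp, by simp⟩

lemma exists_chord {D : Finset (ℕ × ℕ)} {x : ℕ} (hx : x ∈ points D) :
    ∃ p ∈ D, p.1 = x ∨ p.2 = x := by
  simp only [points, Finset.mem_biUnion, Finset.mem_insert, Finset.mem_singleton] at hx
  obtain ⟨p, hp, h⟩ := hx
  exact ⟨p, hp, by tauto⟩

lemma points_union (D E : Finset (ℕ × ℕ)) : points (D ∪ E) = points D ∪ points E := by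
  ext x
  simp only [points, Finset.mem_biUnion, Finset.mem_union]
  constructor
  · rintro ⟨p, hp | hp, hx⟩
    exacts [Or.inl ⟨p, hp, hx⟩, Or.inr ⟨p, hp, hx⟩]
  · rintro (⟨p, hp, hx⟩ | ⟨p, hp, hx⟩)
    exacts [⟨p, Or.inl hp, hx⟩, ⟨p, Or.inr hp, hx⟩]

lemma points_mono {D E : Finset (ℕ × ℕ)} (h : D ⊆ E) : points D ⊆ points E :=
  Finset.biUnion_subset_biUnion_of_subset_left _ h

lemma chord_eq_of_shared {D : Finset (ℕ × ℕ)} (hM : IsMatching D) {p q : ℕ × ℕ}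
    (hp : p ∈ D) (hq : q ∈ D)
    (h : p.1 = q.1 ∨ p.1 = q.2 ∨ p.2 = q.1 ∨ p.2 = q.2) : p = q := by
  by_contra hne
  have := hM.2 p hp q hq hne
  tauto

lemma matching_subset {D E : Finset (ℕ × ℕ)} (h : E ⊆ D) (hM : IsMatching D) :
    IsMatching E :=
  ⟨fun p hp => hM.1 p (h hp), fun p hp q hq hne => hM.2 p (h hp) q (h hq) hne⟩

lemma card_points {D : Finset (ℕ × ℕ)} (hM : IsMatching D) :
    (points D).card = 2 * D.card := by
  rw [points, Finset.card_biUnion]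
  · rw [Finset.sum_congr rfl (g := fun _ => 2), Finset.sum_const, smul_eq_mul, mul_comm]
    intro p hp
    have := hM.1 p hp
    rw [Finset.card_insert_of_notMem (by simp; omega), Finset.card_singleton]
  · intro p hp q hq hne
    have := hM.2 p hp q hq hne
    simp only [Finset.disjoint_insert_left, Finset.mem_insert, Finset.mem_singleton,
      Finset.disjoint_singleton_left, not_or]
    omega

/-- Barrier lemma: if every chord lies strictly left or strictly right of `w`,
reachability preserves the side. -/
lemma reach_side {D : Finset (ℕ × ℕ)} {w : ℕ}
    (hD : ∀ c ∈ D, c.2 < w ∨ w < c.1) {a b : ℕ × ℕ}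
    (h : Reach D a b) (ha : a.2 < w) : b.2 < w := by
  induction h with
  | refl => exact ha
  | tail _ hstep ih =>
    rcases hstep with ⟨hx, hy, hc | hc⟩
    · rcases hD _ hy with h' | h' <;> [exact h'; · exfalso; rcases hc with ⟨_, _, _⟩; omega]
    · rcases hD _ hy with h' | h' <;> [exact h'; · exfalso; rcases hc with ⟨_, _, _⟩; omega]

/-- Nesting barrier: if every chord of `D` is either strictly inside `(l, r)`
(both endpoints) or has no endpoint strictly inside, then reachability preserves
being inside. -/
lemma reach_inside {D : Finset (ℕ × ℕ)} {l r : ℕ}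
    (hD : ∀ c ∈ D, (l < c.1 ∧ c.2 < r) ∨
      (¬(l < c.1 ∧ c.1 < r) ∧ ¬(l < c.2 ∧ c.2 < r)))
    {a b : ℕ × ℕ} (h : Reach D a b) (ha : l < a.1 ∧ a.2 < r) :
    l < b.1 ∧ b.2 < r := by
  induction h with
  | refl => exact ha
  | tail _ hstep ih =>
    rcases hstep with ⟨hx, hy, hc | hc⟩ <;>
    · rcases hD _ hy with h' | h' <;> [exact h'; · exfalso; rcases hc with ⟨_, _, _⟩; omega]

/-- If `T` is a `Step D`-closed subset containing `a`, reachability in `D`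
restricts to reachability in `T`. -/
lemma reach_restrict {D T : Finset (ℕ × ℕ)}
    (hcl : ∀ x ∈ T, ∀ y, Step D x y → y ∈ T) {a b : ℕ × ℕ}
    (ha : a ∈ T) (h : Reach D a b) : Reach T a b ∧ b ∈ T := by
  induction h with
  | refl => exact ⟨Relation.ReflTransGen.refl, ha⟩
  | tail _ hstep ih =>
    have hy := hcl _ ih.2 _ hstep
    exact ⟨ih.1.tail ⟨ih.2, hy, hstep.2.2⟩, hy⟩

lemma mem_componentOf {D : Finset (ℕ × ℕ)} {p q : ℕ × ℕ} :
    q ∈ componentOf D p ↔ q ∈ D ∧ Reach D p q := by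
  simp [componentOf]

end ChordStmt


namespace ChordStmt

/-- Diagrams on a prescribed point set. -/
def good (P : Finset ℕ) (D : Finset (ℕ × ℕ)) : Prop :=
  IsMatching D ∧ points D = P ∧ ConnectedDiagram D

def cmap (f : ℕ → ℕ) (D : Finset (ℕ × ℕ)) : Finset (ℕ × ℕ) :=
  D.image fun p => (f p.1, f p.2)

lemma points_cmap (f : ℕ → ℕ) (D : Finset (ℕ × ℕ)) :
    points (cmap f D) = (points D).image f := by
  ext x
  simp only [points, cmap, Finset.mem_biUnion, Finset.mem_image, Finset.mem_insert,
    Finset.mem_singleton]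
  constructor
  · rintro ⟨q, ⟨p, hp, rfl⟩, hx⟩
    rcases hx with rfl | rfl
    · exact ⟨p.1, ⟨p, hp, by simp⟩, rfl⟩
    · exact ⟨p.2, ⟨p, hp, by simp⟩, rfl⟩
  · rintro ⟨y, ⟨p, hp, hy⟩, rfl⟩
    refine ⟨(f p.1, f p.2), ⟨p, hp, rfl⟩, ?_⟩
    rcases hy with rfl | rfl
    · exact Or.inl rfl
    · exact Or.inr rfl

section transport

variable {P Q : Finset ℕ} {f g : ℕ → ℕ}
variable (hfP : ∀ x ∈ P, f x ∈ Q) (hgQ : ∀ y ∈ Q, g y ∈ P)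
variable (hgf : ∀ x ∈ P, g (f x) = x) (hfg : ∀ y ∈ Q, f (g y) = y)
variable (hiff : ∀ x ∈ P, ∀ y ∈ P, (x < y ↔ f x < f y))

include hgf hiff in
lemma cmap_good {D : Finset (ℕ × ℕ)} (hD : good P D) : good (P.image f) (cmap f D) := by
  obtain ⟨hM, hpts, hne, hconn⟩ := hD
  have hmem : ∀ p ∈ D, p.1 ∈ P ∧ p.2 ∈ P := fun p hp =>
    ⟨hpts ▸ fst_mem_points hp, hpts ▸ snd_mem_points hp⟩
  have hinj : ∀ x ∈ P, ∀ y ∈ P, f x = f y → x = y := by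
    intro x hx y hy hxy
    rcases lt_trichotomy x y with h | h | h
    · exact absurd ((hiff x hx y hy).mp h) (by omega)
    · exact h
    · exact absurd ((hiff y hy x hx).mp h) (by omega)
  have hcross : ∀ p ∈ D, ∀ q ∈ D,
      (crosses p q ↔ crosses (f p.1, f p.2) (f q.1, f q.2)) := by
    intro p hp q hq
    obtain ⟨hp1, hp2⟩ := hmem p hp
    obtain ⟨hq1, hq2⟩ := hmem q hq
    unfold crosses
    rw [show ((f p.1, f p.2) : ℕ × ℕ).1 = f p.1 from rfl]
    constructor
    · rintro ⟨h1, h2, h3⟩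
      exact ⟨(hiff _ hp1 _ hq1).mp h1, (hiff _ hq1 _ hp2).mp h2, (hiff _ hp2 _ hq2).mp h3⟩
    · rintro ⟨h1, h2, h3⟩
      exact ⟨(hiff _ hp1 _ hq1).mpr h1, (hiff _ hq1 _ hp2).mpr h2, (hiff _ hp2 _ hq2).mpr h3⟩
  have hstep : ∀ p q, Step D p q → Step (cmap f D) (f p.1, f p.2) (f q.1, f q.2) := by
    rintro p q ⟨hp, hq, h | h⟩
    · exact ⟨Finset.mem_image_of_mem _ hp, Finset.mem_image_of_mem _ hq,
        Or.inl ((hcross p hp q hq).mp h)⟩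
    · exact ⟨Finset.mem_image_of_mem _ hp, Finset.mem_image_of_mem _ hq,
        Or.inr ((hcross q hq p hp).mp h)⟩
  have hreach : ∀ p q, Reach D p q → Reach (cmap f D) (f p.1, f p.2) (f q.1, f q.2) := by
    intro p q h
    induction h with
    | refl => exact Relation.ReflTransGen.refl
    | tail _ hst ih => exact ih.tail (hstep _ _ hst)
  refine ⟨⟨?_, ?_⟩, ?_, ?_, ?_⟩
  · rintro p hp
    obtain ⟨q, hq, rfl⟩ := Finset.mem_image.mp hp
    exact (hiff _ (hmem q hq).1 _ (hmem q hq).2).mp (hM.1 q hq)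
  · rintro p hp q hq hne
    obtain ⟨p', hp', rfl⟩ := Finset.mem_image.mp hp
    obtain ⟨q', hq', rfl⟩ := Finset.mem_image.mp hq
    have hne' : p' ≠ q' := fun h => hne (by rw [h])
    have hd := hM.2 p' hp' q' hq' hne'
    obtain ⟨a1, a2⟩ := hmem p' hp'
    obtain ⟨b1, b2⟩ := hmem q' hq'
    refine ⟨fun h => hd.1 (hinj _ a1 _ b1 h), fun h => hd.2.1 (hinj _ a1 _ b2 h),
      fun h => hd.2.2.1 (hinj _ a2 _ b1 h), fun h => hd.2.2.2 (hinj _ a2 _ b2 h)⟩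
  · rw [points_cmap, hpts]
  · obtain ⟨p, hp⟩ := hne
    exact ⟨_, Finset.mem_image_of_mem _ hp⟩
  · rintro p hp q hq
    obtain ⟨p', hp', rfl⟩ := Finset.mem_image.mp hp
    obtain ⟨q', hq', rfl⟩ := Finset.mem_image.mp hq
    exact hreach _ _ (hconn p' hp' q' hq')

include hgf in
lemma cmap_cmap {D : Finset (ℕ × ℕ)} (hpts : points D = P) : cmap g (cmap f D) = D := by
  have hmem : ∀ p ∈ D, p.1 ∈ P ∧ p.2 ∈ P := fun p hp =>
    ⟨hpts ▸ fst_mem_points hp, hpts ▸ snd_mem_points hp⟩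
  rw [cmap, cmap, Finset.image_image]
  have : ∀ p ∈ D, ((fun p : ℕ × ℕ => (g p.1, g p.2)) ∘ fun p : ℕ × ℕ => (f p.1, f p.2)) p
      = id p := by
    intro p hp
    obtain ⟨h1, h2⟩ := hmem p hp
    simp [hgf _ h1, hgf _ h2]
  rw [Finset.image_congr (fun p hp => this p hp), Finset.image_id]

include hfP hgQ hgf hfg hiff in
lemma ncard_good_eq : {D | good P D}.ncard = {D | good Q D}.ncard := by
  have hQ : P.image f = Q := by
    ext y
    simp only [Finset.mem_image]
    exact ⟨fun ⟨x, hx, hxy⟩ => hxy ▸ hfP x hx, fun hy => ⟨g y, hgQ y hy, hfg y hy⟩⟩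
  have hiff' : ∀ x ∈ Q, ∀ y ∈ Q, (x < y ↔ g x < g y) := by
    intro x hx y hy
    have := hiff _ (hgQ x hx) _ (hgQ y hy)
    rw [hfg x hx, hfg y hy] at this
    exact this.symm
  have hP : Q.image g = P := by
    ext x
    simp only [Finset.mem_image]
    exact ⟨fun ⟨y, hy, hxy⟩ => hxy ▸ hgQ y hy, fun hx => ⟨f x, hfP x hx, hgf x hx⟩⟩
  have himg : {D | good Q D} = cmap f '' {D | good P D} := by
    ext E
    constructor
    · intro hE
      refine ⟨cmap g E, hP ▸ cmap_good hfg hiff' hE, ?_⟩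
      exact cmap_cmap (g := f) hfg hE.2.1
    · rintro ⟨D, hD, rfl⟩
      exact hQ ▸ cmap_good hgf hiff hD
  rw [himg, Set.ncard_image_of_injOn]
  intro D1 h1 D2 h2 heq
  have e1 := cmap_cmap (g := g) hgf h1.2.1
  have e2 := cmap_cmap (g := g) hgf h2.2.1
  rw [← e1, ← e2, heq]

end transport

end ChordStmt


open scoped Classical

namespace ChordStmt

noncomputable def goodFinset (P : Finset ℕ) : Finset (Finset (ℕ × ℕ)) :=
  ((P ×ˢ P).powerset).filter fun D => good P D

lemma chords_sub {P : Finset ℕ} {D : Finset (ℕ × ℕ)} (hpts : points D = P) :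
    D ⊆ P ×ˢ P := by
  intro p hp
  rw [Finset.mem_product]
  exact ⟨hpts ▸ fst_mem_points hp, hpts ▸ snd_mem_points hp⟩

lemma coe_goodFinset (P : Finset ℕ) : ({D | good P D} : Set (Finset (ℕ × ℕ))) = ↑(goodFinset P) := by
  ext D
  simp only [goodFinset, Finset.coe_filter, Finset.mem_powerset, Set.mem_setOf_eq,
    Set.mem_setOf_eq]
  exact ⟨fun h => ⟨chords_sub h.2.1, h⟩, fun h => h.2⟩

lemma ncard_good (P : Finset ℕ) : ({D | good P D} : Set (Finset (ℕ × ℕ))).ncard = (goodFinset P).card := by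
  rw [coe_goodFinset, Set.ncard_coe_finset]

lemma c_eq_card (n : ℕ) : c n = (goodFinset (Finset.Icc 1 (2 * n))).card := by
  rw [c, ← ncard_good]
  congr 1
  ext D
  simp only [Set.mem_setOf_eq, IsDiagramOn, good]
  tauto

lemma c_one : c 1 = 1 := by
  rw [c]
  convert Set.ncard_singleton ({((1 : ℕ), (2 : ℕ))} : Finset (ℕ × ℕ)) using 2
  ext D
  simp only [Set.mem_setOf_eq, Set.mem_singleton_iff]
  constructor
  · rintro ⟨⟨hM, hpts⟩, hne, -⟩
    have hall : ∀ p ∈ D, p = ((1 : ℕ), (2 : ℕ)) := by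
      intro p hp
      have h1 : p.1 ∈ Finset.Icc 1 (2 * 1) := hpts ▸ fst_mem_points hp
      have h2 : p.2 ∈ Finset.Icc 1 (2 * 1) := hpts ▸ snd_mem_points hp
      have := hM.1 p hp
      simp only [Finset.mem_Icc] at h1 h2
      have : p.1 = 1 ∧ p.2 = 2 := by omega
      exact Prod.ext this.1 this.2
    exact Finset.eq_singleton_iff_nonempty_unique_mem.mpr ⟨hne, hall⟩
  · rintro rfl
    refine ⟨⟨⟨?_, ?_⟩, ?_⟩, ⟨_, Finset.mem_singleton_self _⟩, ?_⟩
    · intro p hp; simp at hp; subst hp; norm_num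
    · intro p hp q hq hne
      simp at hp hq; subst hp; subst hq; simp at hne
    · ext x; simp [points, Finset.mem_Icc]; omega
    · intro p hp q hq
      simp at hp hq; subst hp; subst hq
      exact Relation.ReflTransGen.refl

end ChordStmt


open scoped Classical

namespace ChordStmt

/-- The point set of the inserted component. -/
def P2 (p m : ℕ) : Finset ℕ := {2} ∪ Finset.Icc (p + 2) (p + 2 * m)

/-- The point set of the root component. -/
def P1 (n p m : ℕ) : Finset ℕ := Finset.Icc 1 (2 * n) \ P2 p m

lemma mem_P2 {p m x : ℕ} : x ∈ P2 p m ↔ (x = 2 ∨ (p + 2 ≤ x ∧ x ≤ p + 2 * m)) := by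
  simp [P2, Finset.mem_Icc]

lemma mem_P1 {n p m x : ℕ} (hp : 2 ≤ p) (hm : 1 ≤ m) (hpm : p + 2 * m ≤ 2 * n) :
    x ∈ P1 n p m ↔ (x = 1 ∨ (3 ≤ x ∧ x ≤ p + 1) ∨ (p + 2 * m + 1 ≤ x ∧ x ≤ 2 * n)) := by
  simp only [P1, Finset.mem_sdiff, Finset.mem_Icc, mem_P2]
  omega

lemma card_good_P2 {p m : ℕ} (hm : 1 ≤ m) (hp : 2 ≤ p) :
    (goodFinset (P2 p m)).card = c m := by
  rw [c_eq_card, ← ncard_good, ← ncard_good]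
  refine ncard_good_eq (f := fun y => if y = 2 then 1 else y - p)
    (g := fun x => if x = 1 then 2 else x + p) ?_ ?_ ?_ ?_ ?_
  · intro x hx
    rw [mem_P2] at hx
    simp only [Finset.mem_Icc]
    try dsimp only
    split_ifs <;> omega
  · intro y hy
    simp only [Finset.mem_Icc] at hy
    rw [mem_P2]
    try dsimp only
    split_ifs <;> omega
  · intro x hx
    rw [mem_P2] at hx
    try dsimp only
    split_ifs <;> omega
  · intro y hy
    simp only [Finset.mem_Icc] at hy
    try dsimp only
    split_ifs <;> omega
  · intro x hx y hy
    rw [mem_P2] at hx hy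
    try dsimp only
    split_ifs <;> omega

lemma card_good_P1 {n p m : ℕ} (hm : 1 ≤ m) (hmn : m < n) (hp : 2 ≤ p)
    (hpm : p + 2 * m ≤ 2 * n) :
    (goodFinset (P1 n p m)).card = c (n - m) := by
  rw [c_eq_card, ← ncard_good, ← ncard_good]
  refine ncard_good_eq
    (f := fun x => if x = 1 then 1 else if x ≤ p + 1 then x - 1 else x - 2 * m)
    (g := fun x => if x = 1 then 1 else if x ≤ p then x + 1 else x + 2 * m) ?_ ?_ ?_ ?_ ?_
  · intro x hx
    rw [mem_P1 hp hm hpm] at hx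
    simp only [Finset.mem_Icc]
    try dsimp only
    split_ifs <;> omega
  · intro y hy
    simp only [Finset.mem_Icc] at hy
    rw [mem_P1 hp hm hpm]
    try dsimp only
    split_ifs <;> omega
  · intro x hx
    rw [mem_P1 hp hm hpm] at hx
    try dsimp only
    split_ifs <;> omega
  · intro y hy
    simp only [Finset.mem_Icc] at hy
    try dsimp only
    split_ifs <;> omega
  · intro x hx y hy
    rw [mem_P1 hp hm hpm] at hx hy
    try dsimp only
    split_ifs <;> omega

end ChordStmt


open scoped Classical

namespace ChordStmt

section union

variable {n m p : ℕ} {E1 E2 : Finset (ℕ × ℕ)}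

lemma chord_endpoints {P : Finset ℕ} {E : Finset (ℕ × ℕ)} (hpts : points E = P)
    {q : ℕ × ℕ} (hq : q ∈ E) : q.1 ∈ P ∧ q.2 ∈ P :=
  ⟨hpts ▸ fst_mem_points hq, hpts ▸ snd_mem_points hq⟩

/-- There is a unique chord at a left endpoint equal to the minimum-like points 1 / 2. -/
lemma chord_at_low {P : Finset ℕ} {E : Finset (ℕ × ℕ)} (hM : IsMatching E)
    (hpts : points E = P) {x : ℕ} (hx : x ∈ P) (hlow : ∀ y ∈ P, y < x → False) :
    ∃ s ∈ E, s.1 = x := by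
  obtain ⟨s, hs, h⟩ := exists_chord (hpts ▸ hx : x ∈ points E)
  rcases h with h | h
  · exact ⟨s, hs, h⟩
  · exfalso
    have h1 : s.1 ∈ P := (chord_endpoints hpts hs).1
    have := hM.1 s hs
    exact hlow _ h1 (by omega)

theorem union_good (hm : 1 ≤ m) (hmn : m < n) (hp : 2 ≤ p) (hpm : p + 2 * m ≤ 2 * n)
    (h1 : good (P1 n p m) E1) (h2 : good (P2 p m) E2) :
    good (Finset.Icc 1 (2 * n)) (E1 ∪ E2) := by
  obtain ⟨hM1, hpts1, hne1, hconn1⟩ := h1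
  obtain ⟨hM2, hpts2, hne2, hconn2⟩ := h2
  have hP1 : ∀ q ∈ E1, (q.1 = 1 ∨ (3 ≤ q.1 ∧ q.1 ≤ p + 1) ∨ (p + 2 * m + 1 ≤ q.1 ∧ q.1 ≤ 2 * n))
      ∧ (q.2 = 1 ∨ (3 ≤ q.2 ∧ q.2 ≤ p + 1) ∨ (p + 2 * m + 1 ≤ q.2 ∧ q.2 ≤ 2 * n)) := by
    intro q hq
    have h := chord_endpoints hpts1 hq
    exact ⟨(mem_P1 hp hm hpm).mp h.1, (mem_P1 hp hm hpm).mp h.2⟩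
  have hP2 : ∀ q ∈ E2, (q.1 = 2 ∨ (p + 2 ≤ q.1 ∧ q.1 ≤ p + 2 * m))
      ∧ (q.2 = 2 ∨ (p + 2 ≤ q.2 ∧ q.2 ≤ p + 2 * m)) := by
    intro q hq
    have h := chord_endpoints hpts2 hq
    exact ⟨mem_P2.mp h.1, mem_P2.mp h.2⟩
  -- the chord at point 2
  have h2P : (2 : ℕ) ∈ P2 p m := mem_P2.mpr (Or.inl rfl)
  obtain ⟨s, hs, hs1⟩ := chord_at_low hM2 hpts2 h2P (by
    intro y hy hlt; rw [mem_P2] at hy; omega)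
  have hσ : p + 2 ≤ s.2 ∧ s.2 ≤ p + 2 * m := by
    have := (hP2 s hs).2
    have := hM2.1 s hs
    omega
  -- a chord of E1 crossing s
  have hcross : ∃ f ∈ E1, crosses f s ∨ crosses s f := by
    -- the chord at point 3
    have h3P : (3 : ℕ) ∈ P1 n p m := (mem_P1 hp hm hpm).mpr (by omega)
    obtain ⟨f3, hf3, hf3e⟩ := exists_chord (hpts1 ▸ h3P : (3:ℕ) ∈ points E1)
    have hf3lt := hM1.1 f3 hf3
    -- the chord at point 1
    have h1P : (1 : ℕ) ∈ P1 n p m := (mem_P1 hp hm hpm).mpr (Or.inl rfl)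
    obtain ⟨r1, hr1, hr11⟩ := chord_at_low hM1 hpts1 h1P (by
      intro y hy hlt; rw [mem_P1 hp hm hpm] at hy; omega)
    -- key: any chord of E1 contained in [3, p+1] or any chord (1, y) with y ≤ p+1,
    -- or any chord with exactly one endpoint ≤ p+1 and ≥ 3, yields a crossing with s.
    have low_cross : ∀ f ∈ E1, f.1 = 1 → f.2 ≤ p + 1 → crosses f s ∨ crosses s f := by
      intro f hf h1 h2
      left
      have := (hP1 f hf).2
      have := hM1.1 f hf
      exact ⟨by omega, by omega, by omega⟩
    have mid_cross : ∀ f ∈ E1, 3 ≤ f.1 → f.1 ≤ p + 1 → p + 2 * m + 1 ≤ f.2 →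
        crosses f s ∨ crosses s f := by
      intro f hf ha hb hc
      right
      exact ⟨by omega, by omega, by omega⟩
    rcases (hP1 f3 hf3).2 with h | h | h
    · -- f3.2 = 1, so f3.1 < 1: impossible
      have := hM1.1 f3 hf3
      have := (hP1 f3 hf3).1
      rcases hf3e with he | he <;> omega
    · -- analysis depending on where f3 sits
      -- f3 is contained in [3,p+1] unless f3.1 = 1
      rcases (hP1 f3 hf3).1 with h1' | h1' | h1'
      · -- f3 = (1, y), y ≤ p+1? f3.2 ≤ p+1 holds by h
        exact ⟨f3, hf3, low_cross f3 hf3 h1' (by omega)⟩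
      · -- f3 ⊆ [3, p+1]; walk to r1
        by_cases hr1low : r1.2 ≤ p + 1
        · exact ⟨r1, hr1, low_cross r1 hr1 hr11 hr1low⟩
        have hreach := hconn1 f3 hf3 r1 hr1
        -- induction along the walk
        have key : ∀ x, Reach E1 f3 x →
            (3 ≤ x.1 ∧ x.2 ≤ p + 1) ∨ ∃ f ∈ E1, crosses f s ∨ crosses s f := by
          intro x hx
          induction hx with
          | refl => exact Or.inl ⟨by omega, by omega⟩
          | tail hab hstep ih =>
            rcases ih with ⟨hx1, hx2⟩ | found
            · obtain ⟨hxE, hyE, hc⟩ := hstep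
              have hy1 := (hP1 _ hyE).1
              have hy2 := (hP1 _ hyE).2
              have hxlt := hM1.1 _ hxE
              have hylt := hM1.1 _ hyE
              rcases hc with hc | hc
              · -- crosses x' y' : x'.1 < y'.1 < x'.2 < y'.2 ; y'.1 ∈ (x'.1, x'.2) ⊆ [3,p+1]
                obtain ⟨c1, c2, c3⟩ := hc
                rcases hy2 with h' | h' | h'
                · omega
                · exact Or.inl ⟨by omega, by omega⟩
                · exact Or.inr ⟨_, hyE, mid_cross _ hyE (by omega) (by omega) (by omega)⟩
              · -- crosses y' x' : y'.1 < x'.1 < y'.2 < x'.2 ; y'.2 inside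
                obtain ⟨c1, c2, c3⟩ := hc
                rcases hy1 with h' | h' | h'
                · exact Or.inr ⟨_, hyE, low_cross _ hyE h' (by omega)⟩
                · exact Or.inl ⟨by omega, by omega⟩
                · omega
            · exact Or.inr found
        rcases key r1 hreach with ⟨hk1, _⟩ | found
        · omega
        · exact found
      · -- 3 is an endpoint with the other endpoint far right: f3 = (3, big) crosses s
        -- f3.1 ≥ p + 2m + 1 > 3 so f3.1 ≠ 3; hence f3.2 = 3, contradiction with h
        rcases hf3e with he | he <;> omega
    · -- f3.2 ≥ p + 2m + 1; then f3.1 = 3 (since f3.1 = 1 or mid would need check)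
      rcases hf3e with he | he
      · -- f3.1 = 3
        exact ⟨f3, hf3, mid_cross f3 hf3 (by omega) (by omega) (by omega)⟩
      · -- f3.2 = 3 but f3.2 ≥ p+2m+1 ≥ 7: impossible
        omega
  -- assemble
  obtain ⟨f, hf, hfs⟩ := hcross
  have hdisj : ∀ x, x ∈ P1 n p m → x ∈ P2 p m → False := by
    intro x hx1 hx2
    rw [mem_P1 hp hm hpm] at hx1
    rw [mem_P2] at hx2
    omega
  refine ⟨⟨?_, ?_⟩, ?_, ?_, ?_⟩
  · intro q hq
    rcases Finset.mem_union.mp hq with h | h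
    exacts [hM1.1 q h, hM2.1 q h]
  · intro a ha b hb hne
    rcases Finset.mem_union.mp ha with ha' | ha' <;> rcases Finset.mem_union.mp hb with hb' | hb'
    · exact hM1.2 a ha' b hb' hne
    · have hA := chord_endpoints hpts1 ha'
      have hB := chord_endpoints hpts2 hb'
      refine ⟨?_, ?_, ?_, ?_⟩ <;> intro h <;>
        [exact hdisj _ hA.1 (h ▸ hB.1); exact hdisj _ hA.1 (h ▸ hB.2);
         exact hdisj _ hA.2 (h ▸ hB.1); exact hdisj _ hA.2 (h ▸ hB.2)]
    · have hA := chord_endpoints hpts2 ha'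
      have hB := chord_endpoints hpts1 hb'
      refine ⟨?_, ?_, ?_, ?_⟩ <;> intro h <;>
        [exact hdisj _ hB.1 (h ▸ hA.1); exact hdisj _ hB.2 (h ▸ hA.1);
         exact hdisj _ hB.1 (h ▸ hA.2); exact hdisj _ hB.2 (h ▸ hA.2)]
    · exact hM2.2 a ha' b hb' hne
  · rw [points_union, hpts1, hpts2]
    ext x
    simp only [Finset.mem_union, Finset.mem_Icc, mem_P1 hp hm hpm, mem_P2]
    omega
  · exact ⟨s, Finset.mem_union_right _ hs⟩
  · -- connectivity
    have hsu : s ∈ E1 ∪ E2 := Finset.mem_union_right _ hs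
    have hstep_fs : Step (E1 ∪ E2) f s := ⟨Finset.mem_union_left _ hf, hsu, hfs⟩
    have hall : ∀ a ∈ E1 ∪ E2, Reach (E1 ∪ E2) a s := by
      intro a ha
      rcases Finset.mem_union.mp ha with h | h
      · exact (reach_mono Finset.subset_union_left (hconn1 a h f hf)).tail hstep_fs
      · exact reach_mono Finset.subset_union_right (hconn2 a h s hs)
    intro a ha b hb
    exact (hall a ha).trans (reach_symm (hall b hb))

end union

end ChordStmt


open scoped Classical

namespace ChordStmt

section uniq

variable {n m p : ℕ} {E1 E2 : Finset (ℕ × ℕ)}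

lemma E2_block (hp : 2 ≤ p) (h2 : good (P2 p m) E2) {s : ℕ × ℕ} (hs : s ∈ E2) (hs1 : s.1 = 2)
    {q : ℕ × ℕ} (hq : q ∈ E2) (hqs : q ≠ s) :
    p + 2 ≤ q.1 ∧ q.1 ≤ p + 2 * m ∧ p + 2 ≤ q.2 ∧ q.2 ≤ p + 2 * m := by
  obtain ⟨hM2, hpts2, -⟩ := h2
  have h1 := mem_P2.mp (chord_endpoints hpts2 hq).1
  have h2 := mem_P2.mp (chord_endpoints hpts2 hq).2
  have hlt := hM2.1 q hq
  have hne2 : q.1 ≠ 2 := by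
    intro h
    exact hqs (chord_eq_of_shared hM2 hq hs (by omega))
  have hne2' : q.2 ≠ 2 := by
    intro h
    exact hqs (chord_eq_of_shared hM2 hq hs (by omega))
  omega

theorem comp_eq (hm : 1 ≤ m) (hmn : m < n) (hp : 2 ≤ p) (hpm : p + 2 * m ≤ 2 * n)
    (h1 : good (P1 n p m) E1) (h2 : good (P2 p m) E2)
    {s r : ℕ × ℕ} (hs : s ∈ E2) (hs1 : s.1 = 2) (hr : r ∈ E1) :
    componentOf ((E1 ∪ E2).erase s) r = E1 := by
  obtain ⟨hM1, hpts1, hne1, hconn1⟩ := h1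
  have hsE1 : s ∉ E1 := by
    intro h
    have := (mem_P1 hp hm hpm).mp (chord_endpoints hpts1 h).1
    omega
  have hsub : E1 ⊆ (E1 ∪ E2).erase s := by
    intro x hx
    exact Finset.mem_erase.mpr ⟨fun h => hsE1 (h ▸ hx), Finset.mem_union_left _ hx⟩
  ext x
  rw [mem_componentOf]
  constructor
  · rintro ⟨hxD, hreach⟩
    refine (reach_restrict ?_ hr hreach).2
    -- closure of E1 under steps in (E1 ∪ E2).erase s
    intro y hy z hz
    obtain ⟨hyD, hzD, hc⟩ := hz
    rcases Finset.mem_union.mp (Finset.mem_erase.mp hzD).2 with h | h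
    · exact h
    · exfalso
      have hzs : z ≠ s := (Finset.mem_erase.mp hzD).1
      have hblock := E2_block hp h2 hs hs1 h hzs
      have hy1 := (mem_P1 hp hm hpm).mp (chord_endpoints hpts1 hy).1
      have hy2 := (mem_P1 hp hm hpm).mp (chord_endpoints hpts1 hy).2
      rcases hc with ⟨c1, c2, c3⟩ | ⟨c1, c2, c3⟩ <;> omega
  · intro hx
    exact ⟨hsub hx, reach_mono hsub (hconn1 r hr x hx)⟩

theorem union_inj {m' p' : ℕ} {E1' E2' : Finset (ℕ × ℕ)}
    (hm : 1 ≤ m) (hmn : m < n) (hp : 2 ≤ p) (hpm : p + 2 * m ≤ 2 * n)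
    (h1 : good (P1 n p m) E1) (h2 : good (P2 p m) E2)
    (hm' : 1 ≤ m') (hmn' : m' < n) (hp' : 2 ≤ p') (hpm' : p' + 2 * m' ≤ 2 * n)
    (h1' : good (P1 n p' m') E1') (h2' : good (P2 p' m') E2')
    (heq : E1 ∪ E2 = E1' ∪ E2') :
    m = m' ∧ p = p' ∧ E1 = E1' ∧ E2 = E2' := by
  have hD := union_good hm hmn hp hpm h1 h2
  obtain ⟨hMD, hptsD, -⟩ := hD
  -- chords at 2 in E2 and E2'
  have h2P : (2 : ℕ) ∈ P2 p m := mem_P2.mpr (Or.inl rfl)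
  have h2P' : (2 : ℕ) ∈ P2 p' m' := mem_P2.mpr (Or.inl rfl)
  obtain ⟨s, hs, hs1⟩ := chord_at_low h2.1 h2.2.1 h2P (by
    intro y hy hlt; rw [mem_P2] at hy; omega)
  obtain ⟨s', hs', hs1'⟩ := chord_at_low h2'.1 h2'.2.1 h2P' (by
    intro y hy hlt; rw [mem_P2] at hy; omega)
  have hss' : s = s' := by
    refine chord_eq_of_shared hMD (Finset.mem_union_right _ hs)
      (heq ▸ Finset.mem_union_right _ hs' : s' ∈ E1 ∪ E2) (by omega)
  -- chords at 1
  have h1P : (1 : ℕ) ∈ P1 n p m := (mem_P1 hp hm hpm).mpr (Or.inl rfl)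
  have h1P' : (1 : ℕ) ∈ P1 n p' m' := (mem_P1 hp' hm' hpm').mpr (Or.inl rfl)
  obtain ⟨r, hr, hr1⟩ := chord_at_low h1.1 h1.2.1 h1P (by
    intro y hy hlt; rw [mem_P1 hp hm hpm] at hy; omega)
  obtain ⟨r', hr', hr1'⟩ := chord_at_low h1'.1 h1'.2.1 h1P' (by
    intro y hy hlt; rw [mem_P1 hp' hm' hpm'] at hy; omega)
  have hrr' : r = r' := by
    refine chord_eq_of_shared hMD (Finset.mem_union_left _ hr)
      (heq ▸ Finset.mem_union_left _ hr' : r' ∈ E1 ∪ E2) (by omega)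
  -- components agree
  have hE1 : E1 = E1' := by
    have e1 := comp_eq hm hmn hp hpm h1 h2 hs hs1 hr
    have e2 := comp_eq hm' hmn' hp' hpm' h1' h2' hs' hs1' hr'
    rw [← e1, ← e2, heq, hss', hrr']
  have hE2 : E2 = E2' := by
    have hgen : ∀ (P1s P2s : Finset ℕ) (F1 F2 : Finset (ℕ × ℕ)),
        good P1s F1 → good P2s F2 → (∀ x, x ∈ P1s → x ∈ P2s → False) →
        F2 = (F1 ∪ F2) \ F1 := by
      intro P1s P2s F1 F2 g1 g2 hdisj
      ext q
      simp only [Finset.mem_sdiff, Finset.mem_union]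
      constructor
      · intro hq
        refine ⟨Or.inr hq, fun hq1 => ?_⟩
        exact hdisj _ (chord_endpoints g1.2.1 hq1).1 (chord_endpoints g2.2.1 hq).1
      · rintro ⟨hq | hq, hq1⟩
        · exact absurd hq hq1
        · exact hq
    have hd : ∀ x, x ∈ P1 n p m → x ∈ P2 p m → False := by
      intro x hx1 hx2; rw [mem_P1 hp hm hpm] at hx1; rw [mem_P2] at hx2; omega
    have hd' : ∀ x, x ∈ P1 n p' m' → x ∈ P2 p' m' → False := by
      intro x hx1 hx2; rw [mem_P1 hp' hm' hpm'] at hx1; rw [mem_P2] at hx2; omega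
    rw [hgen _ _ _ _ h1 h2 hd, hgen _ _ _ _ h1' h2' hd', heq, hE1]
  -- point sets agree, so m = m' and p = p'
  have hPP : P2 p m = P2 p' m' := by
    rw [← h2.2.1, ← h2'.2.1, hE2]
  have key : ∀ x : ℕ, (x = 2 ∨ (p + 2 ≤ x ∧ x ≤ p + 2 * m)) ↔
      (x = 2 ∨ (p' + 2 ≤ x ∧ x ≤ p' + 2 * m')) := by
    intro x
    rw [← mem_P2, ← mem_P2, hPP]
  have k1 := (key (p + 2)).mp
  have k2 := (key (p' + 2)).mpr
  have k3 := (key (p + 2 * m)).mp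
  have k4 := (key (p' + 2 * m')).mpr
  have hpp : p = p' ∧ m = m' := by omega
  exact ⟨hpp.2, hpp.1, hE1, hE2⟩

end uniq

end ChordStmt


open scoped Classical

namespace ChordStmt

theorem decomp_exists {n : ℕ} {D : Finset (ℕ × ℕ)} (hn : 2 ≤ n)
    (hg : good (Finset.Icc 1 (2 * n)) D) :
    ∃ m p E1 E2, 1 ≤ m ∧ m < n ∧ 2 ≤ p ∧ p + 2 * m ≤ 2 * n ∧
      good (P1 n p m) E1 ∧ good (P2 p m) E2 ∧ E1 ∪ E2 = D := by
  obtain ⟨hM, hpts, hne, hconn⟩ := hg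
  have hbd : ∀ q ∈ D, (1 ≤ q.1 ∧ q.1 ≤ 2 * n) ∧ (1 ≤ q.2 ∧ q.2 ≤ 2 * n) := by
    intro q hq
    have h := chord_endpoints hpts hq
    simp only [Finset.mem_Icc] at h
    exact h
  have hcardD : D.card = n := by
    have := card_points hM
    rw [hpts, Nat.card_Icc] at this
    omega
  -- the chord at 1
  have h1P : (1 : ℕ) ∈ Finset.Icc 1 (2 * n) := by simp [Finset.mem_Icc]; omega
  obtain ⟨r, hr, hr1⟩ := chord_at_low hM hpts h1P (by
    intro y hy hlt; simp [Finset.mem_Icc] at hy; omega)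
  -- the chord at 2
  have h2P : (2 : ℕ) ∈ Finset.Icc 1 (2 * n) := by simp [Finset.mem_Icc]; omega
  obtain ⟨s, hs, hs2⟩ := exists_chord (hpts ▸ h2P : (2:ℕ) ∈ points D)
  have hs1 : s.1 = 2 := by
    rcases hs2 with h | h
    · exact h
    · -- s.2 = 2, so s.1 = 1 and s = r = (1,2), which is isolated: contradiction
      exfalso
      have hlt := hM.1 s hs
      have hb := hbd s hs
      have hsr : s = r := chord_eq_of_shared hM hs hr (by omega)
      have hr2 : r.2 = 2 := hsr ▸ h
      -- r = (1,2) crosses nothing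
      have hiso : ∀ q, ¬ Step D r q := by
        rintro q ⟨-, hq, hc | hc⟩
        · obtain ⟨c1, c2, c3⟩ := hc
          have := hbd q hq
          omega
        · obtain ⟨c1, c2, c3⟩ := hc
          have := hbd q hq
          omega
      -- D has another chord
      have h2card : 1 < D.card := by omega
      obtain ⟨a, ha, b, hb, hab⟩ := Finset.one_lt_card.mp h2card
      have hq : ∃ q ∈ D, q ≠ r := by
        rcases eq_or_ne a r with rfl | h
        · exact ⟨b, hb, fun hbr => hab hbr.symm⟩
        · exact ⟨a, ha, h⟩
      obtain ⟨q, hq, hqr⟩ := hq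
      have := hconn r hr q hq
      rcases Relation.ReflTransGen.cases_head this with h | ⟨c', hc', -⟩
      · exact hqr h.symm
      · exact hiso c' hc'
  clear hs2
  have hsr : s ≠ r := by intro h; rw [h] at hs1; omega
  have hrs : r ∈ D.erase s := Finset.mem_erase.mpr ⟨fun h => hsr h.symm, hr⟩
  -- the two parts
  set E1 := componentOf (D.erase s) r with hE1def
  set E2 := D \ E1 with hE2def
  have hE1sub : E1 ⊆ D := fun x hx => Finset.mem_of_mem_erase (Finset.mem_filter.mp hx).1
  have hrE1 : r ∈ E1 := mem_componentOf.mpr ⟨hrs, Relation.ReflTransGen.refl⟩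
  have hsE1 : s ∉ E1 := fun h => (Finset.mem_erase.mp (Finset.mem_filter.mp h).1).1 rfl
  have hsE2 : s ∈ E2 := Finset.mem_sdiff.mpr ⟨hs, hsE1⟩
  have hcl : ∀ y ∈ E1, ∀ z, Step (D.erase s) y z → z ∈ E1 := by
    intro y hy z hz
    exact mem_componentOf.mpr ⟨hz.2.1, (mem_componentOf.mp hy).2.tail hz⟩
  have hME1 : IsMatching E1 := matching_subset hE1sub hM
  have hME2 : IsMatching E2 := matching_subset (Finset.sdiff_subset) hM
  have hDunion : E1 ∪ E2 = D := Finset.union_sdiff_of_subset hE1sub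
  -- separation: no crossing between E1 and E2 \ {s}
  have hsep : ∀ y ∈ E1, ∀ z ∈ E2, z ≠ s → ¬(crosses y z ∨ crosses z y) := by
    intro y hy z hz hzs hc
    have hzD : z ∈ D.erase s := Finset.mem_erase.mpr ⟨hzs, (Finset.mem_sdiff.mp hz).1⟩
    have : z ∈ E1 := hcl y hy z ⟨(Finset.mem_filter.mp hy).1, hzD, hc⟩
    exact (Finset.mem_sdiff.mp hz).2 this
  -- all E2 chords reach s within E2
  have hE2reach : ∀ z ∈ E2, Reach E2 s z := by
    have key : ∀ x, Reach D r x → (x ∈ E1 ∨ (x ∈ E2 ∧ Reach E2 s x)) := by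
      intro x hx
      induction hx with
      | refl => exact Or.inl hrE1
      | tail hab hstep ih =>
        rename_i b' c'
        have hcD : c' ∈ D := hstep.2.1
        by_cases hcE1 : c' ∈ E1
        · exact Or.inl hcE1
        have hcE2 : c' ∈ E2 := Finset.mem_sdiff.mpr ⟨hcD, hcE1⟩
        by_cases hcs : c' = s
        · exact Or.inr ⟨hcE2, hcs ▸ Relation.ReflTransGen.refl⟩
        rcases ih with hb | ⟨hbE2, hreach⟩
        · -- b' ∈ E1, step to c' ∉ E1, c' ≠ s: contradiction with closure
          exfalso
          have hcD' : c' ∈ D.erase s := Finset.mem_erase.mpr ⟨hcs, hcD⟩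
          exact hcE1 (hcl _ hb c' ⟨(Finset.mem_filter.mp hb).1, hcD', hstep.2.2⟩)
        · -- b' ∈ E2 with reach; extend
          exact Or.inr ⟨hcE2, hreach.tail ⟨hbE2, hcE2, hstep.2.2⟩⟩
    intro z hz
    rcases key z (hconn r hr z (Finset.mem_sdiff.mp hz).1) with h | h
    · exact absurd h (Finset.mem_sdiff.mp hz).2
    · exact h.2
  -- E1 is internally connected
  have hE1reach : ∀ x ∈ E1, Reach E1 r x := by
    intro x hx
    exact (reach_restrict hcl hrE1 (mem_componentOf.mp hx).2).1
  -- point sets are disjoint and partition Icc 1 (2n)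
  have hptdisj : ∀ x, x ∈ points E1 → x ∈ points E2 → False := by
    intro x hx1 hx2
    obtain ⟨q1, hq1, he1⟩ := exists_chord hx1
    obtain ⟨q2, hq2, he2⟩ := exists_chord hx2
    have hne12 : q1 ≠ q2 := by
      intro h
      exact (Finset.mem_sdiff.mp hq2).2 (h ▸ hq1)
    have := hM.2 q1 (hE1sub hq1) q2 (Finset.sdiff_subset hq2) hne12
    omega
  have hptsplit : ∀ x, x ∈ Finset.Icc 1 (2*n) → (x ∈ points E1 ∨ x ∈ points E2) := by
    intro x hx
    obtain ⟨q, hq, he⟩ := exists_chord (hpts ▸ hx : x ∈ points D)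
    by_cases h : q ∈ E1
    · left; rcases he with he | he <;> [exact he ▸ fst_mem_points h; exact he ▸ snd_mem_points h]
    · right
      have : q ∈ E2 := Finset.mem_sdiff.mpr ⟨hq, h⟩
      rcases he with he | he <;> [exact he ▸ fst_mem_points this; exact he ▸ snd_mem_points this]
  have hptsub : ∀ x, x ∈ points E1 ∨ x ∈ points E2 → x ∈ Finset.Icc 1 (2*n) := by
    intro x hx
    rw [← hpts, ← hDunion, points_union]
    rcases hx with h | h
    · exact Finset.mem_union_left _ h
    · exact Finset.mem_union_right _ h
  have h1E1 : (1 : ℕ) ∈ points E1 := hr1 ▸ fst_mem_points hrE1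
  have h2E2 : (2 : ℕ) ∈ points E2 := hs1 ▸ fst_mem_points hsE2
  -- the interval S
  set S := (points E2).erase 2 with hSdef
  have hσS : s.2 ∈ S := by
    have := hM.1 s hs
    exact Finset.mem_erase.mpr ⟨by omega, snd_mem_points hsE2⟩
  have hSne : S.Nonempty := ⟨s.2, hσS⟩
  have hSbd : ∀ x ∈ S, 3 ≤ x ∧ x ≤ 2 * n := by
    intro x hx
    obtain ⟨hx2, hxE2⟩ := Finset.mem_erase.mp hx
    have hxI := hptsub x (Or.inr hxE2)
    simp only [Finset.mem_Icc] at hxI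
    have hx1 : x ≠ 1 := fun h => hptdisj x (h ▸ h1E1) (h ▸ hxE2)
    omega
  set minS := S.min' hSne with hmindef
  set maxS := S.max' hSne with hmaxdef
  have hminS := S.min'_mem hSne
  have hmaxS := S.max'_mem hSne
  have hSmem : ∀ x, x ∈ S → x ≠ 2 ∧ x ∈ points E2 := by
    intro x hx
    rw [hSdef] at hx
    exact Finset.mem_erase.mp hx
  have hmin3 : 3 ≤ minS := (hSbd _ hminS).1
  have hmax2n : maxS ≤ 2 * n := (hSbd _ hmaxS).2
  have hInt : ∀ w, minS < w → w < maxS → w ∈ S := by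
    intro w hw1 hw2
    by_contra hwS
    have hwE2 : w ∉ points E2 := by
      intro h
      exact hwS (by rw [hSdef]; exact Finset.mem_erase.mpr ⟨by omega, h⟩)
    have hwE1 : w ∈ points E1 := by
      rcases hptsplit w (by simp only [Finset.mem_Icc]; omega) with h | h
      · exact h
      · exact absurd h hwE2
    obtain ⟨f, hf, hfw⟩ := exists_chord hwE1
    have hcover : ∃ cc ∈ E2, cc ≠ s ∧ cc.1 < w ∧ w < cc.2 := by
      by_contra hnc
      push_neg at hnc
      have hside : ∀ cc ∈ E2, cc ≠ s → (cc.2 < w ∨ w < cc.1) := by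
        intro cc hcm hcs
        have h1 : cc.1 ≠ w := fun h => hwE2 (h ▸ fst_mem_points hcm)
        have h2 : cc.2 ≠ w := fun h => hwE2 (h ▸ snd_mem_points hcm)
        have h3 := hM.1 cc (Finset.sdiff_subset hcm)
        have := hnc cc hcm hcs
        omega
      have hσw : s.2 ≠ w := fun h => hwE2 (h ▸ snd_mem_points hsE2)
      rcases lt_or_gt_of_ne hσw with hσ | hσ
      · -- s.2 < w : the chord attaining maxS lies right of w yet reaches s from the left
        obtain ⟨v, hv, hve⟩ := exists_chord (hSmem _ hmaxS).2
        have hbar : ∀ cc ∈ E2, cc.2 < w ∨ w < cc.1 := by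
          intro cc hcm
          by_cases h : cc = s
          · subst h; left; exact hσ
          · exact hside cc hcm h
        have hvlt := reach_side hbar (hE2reach v hv) hσ
        have := hM.1 v (Finset.sdiff_subset hv)
        rcases hve with h | h <;> omega
      · -- w < s.2 : the chord attaining minS is left of w but all s-neighbours are right
        obtain ⟨u, hu, hue⟩ := exists_chord (hSmem _ hminS).2
        have hus : u ≠ s := by
          intro h
          subst h
          rcases hue with h | h <;> omega
        have hu1 : u.1 = minS := by
          rcases hue with h | h
          · exact h
          · exfalso
            have hlt' := hM.1 u (Finset.sdiff_subset hu)
            have h2 : u.1 ≠ 2 := by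
              intro h2
              exact hus (chord_eq_of_shared hME2 hu hsE2 (by omega))
            have hu1S : u.1 ∈ S := by
              rw [hSdef]; exact Finset.mem_erase.mpr ⟨h2, fst_mem_points hu⟩
            have := S.min'_le _ hu1S
            omega
        have key : ∀ x, Reach E2 s x → (x = s ∨ w < x.1) := by
          intro x hx
          induction hx with
          | refl => exact Or.inl rfl
          | tail hab hstep ih =>
            rename_i b' c'
            by_cases hcs : c' = s
            · exact Or.inl hcs
            refine Or.inr ?_
            have hcE2 := hstep.2.1
            have hcside := hside c' hcE2 hcs
            have hclt := hM.1 c' (Finset.sdiff_subset hcE2)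
            have hc1ne1 : c'.1 ≠ 1 := fun h => hptdisj 1 h1E1 (h ▸ fst_mem_points hcE2)
            have hc1pos : 1 ≤ c'.1 := ((hbd c' (Finset.sdiff_subset hcE2)).1).1
            rcases ih with rfl | hbw
            · rcases hstep.2.2 with ⟨c1, c2, c3⟩ | ⟨c1, c2, c3⟩ <;> omega
            · have hblt := hM.1 b' (Finset.sdiff_subset hstep.1)
              rcases hstep.2.2 with ⟨c1, c2, c3⟩ | ⟨c1, c2, c3⟩ <;> omega
        rcases key u (hE2reach u hu) with rfl | h
        · exact hus rfl
        · omega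
    obtain ⟨cc, hcm, hcs, hcw1, hcw2⟩ := hcover
    have hcE1side : ∀ x ∈ E1, (cc.1 < x.1 ∧ x.2 < cc.2) ∨
        (¬(cc.1 < x.1 ∧ x.1 < cc.2) ∧ ¬(cc.1 < x.2 ∧ x.2 < cc.2)) := by
      intro x hx
      have hsep' := hsep x hx cc hcm hcs
      have hnx : x ≠ cc := fun h => (Finset.mem_sdiff.mp hcm).2 (h ▸ hx)
      have hd := hM.2 x (hE1sub hx) cc (Finset.sdiff_subset hcm) hnx
      have h1 : ¬ (x.1 < cc.1 ∧ cc.1 < x.2 ∧ x.2 < cc.2) := fun h => hsep' (Or.inl h)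
      have h2 : ¬ (cc.1 < x.1 ∧ x.1 < cc.2 ∧ cc.2 < x.2) := fun h => hsep' (Or.inr h)
      have := hM.1 x (hE1sub hx)
      have := hM.1 cc (Finset.sdiff_subset hcm)
      omega
    have hfin : cc.1 < f.1 ∧ f.2 < cc.2 := by
      rcases hcE1side f hf with h | h
      · exact h
      · exfalso
        rcases hfw with h' | h' <;> omega
    have hrin := reach_inside hcE1side (reach_symm (hE1reach f hf)) hfin
    have hc1b := hbd cc (Finset.sdiff_subset hcm)
    omega
  -- S is an interval
  have hSIcc : S = Finset.Icc minS maxS := by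
    ext x
    simp only [Finset.mem_Icc]
    constructor
    · intro hx
      exact ⟨S.min'_le x hx, S.le_max' x hx⟩
    · rintro ⟨hx1, hx2⟩
      rcases eq_or_lt_of_le hx1 with h | h
      · exact h ▸ hminS
      rcases eq_or_lt_of_le hx2 with h' | h'
      · exact h' ▸ hmaxS
      exact hInt x h h'
  -- cardinalities
  set m := E2.card with hmdef
  have hptsE2card : (points E2).card = 2 * m := card_points hME2
  have hScard : S.card = 2 * m - 1 := by
    rw [hSdef, Finset.card_erase_of_mem h2E2, hptsE2card]
  have hm1 : 1 ≤ m := by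
    rw [hmdef]
    exact Finset.card_pos.mpr ⟨s, hsE2⟩
  have hmn : m < n := by
    have hcard : E1.card + E2.card = n := by
      rw [← hcardD, ← hDunion, Finset.card_union_of_disjoint (Finset.disjoint_sdiff)]
    have : 1 ≤ E1.card := Finset.card_pos.mpr ⟨r, hrE1⟩
    omega
  have hmaxeq : maxS = minS + (2 * m - 2) := by
    have h3 : 3 ≤ minS := (hSbd _ hminS).1
    have hle : minS ≤ maxS := S.min'_le _ hmaxS
    have := hSIcc ▸ hScard
    rw [Nat.card_Icc] at this
    omega
  have hmin4 : 4 ≤ minS := by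
    by_contra hlt
    have hmineq : minS = 3 := by omega
    have hE2pt : ∀ x, x ∈ points E2 → 2 ≤ x ∧ x ≤ maxS := by
      intro x hx
      by_cases h2 : x = 2
      · subst h2
        have := S.min'_le _ hmaxS
        omega
      · have hxS : x ∈ S := by rw [hSdef]; exact Finset.mem_erase.mpr ⟨h2, hx⟩
        exact ⟨by have := (hSbd _ hxS).1; omega, S.le_max' _ hxS⟩
    have hE1pt : ∀ x, x ∈ points E1 → x = 1 ∨ maxS < x := by
      intro x hx
      by_contra h
      push_neg at h
      have hxI := hptsub x (Or.inl hx)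
      simp only [Finset.mem_Icc] at hxI
      have hx2 : x ≠ 2 := fun he => hptdisj x hx (he ▸ h2E2)
      have hxS : x ∈ S := by
        rw [hSIcc]
        simp only [Finset.mem_Icc]
        omega
      exact hptdisj x hx (hSmem _ hxS).2
    have hnocross : ∀ y ∈ E1, ∀ z ∈ E2, ¬(crosses y z ∨ crosses z y) := by
      intro y hy z hz hcr
      have hy1 := hE1pt _ (fst_mem_points hy)
      have hy2 := hE1pt _ (snd_mem_points hy)
      have hz1 := hE2pt _ (fst_mem_points hz)
      have hz2 := hE2pt _ (snd_mem_points hz)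
      have := hM.1 y (hE1sub hy)
      have := hM.1 z (Finset.sdiff_subset hz)
      have hyb := hbd y (hE1sub hy)
      rcases hcr with ⟨c1, c2, c3⟩ | ⟨c1, c2, c3⟩ <;> omega
    have hclD : ∀ y ∈ E1, ∀ z, Step D y z → z ∈ E1 := by
      intro y hy z hz
      by_cases h : z ∈ E1
      · exact h
      · exact absurd hz.2.2 (hnocross y hy z (Finset.mem_sdiff.mpr ⟨hz.2.1, h⟩))
    exact hsE1 ((reach_restrict hclD hrE1 (hconn r hr s hs)).2)
  -- assemble
  set p := minS - 2 with hpdef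
  have hp2 : 2 ≤ p := by omega
  have hppm : p + 2 * m ≤ 2 * n := by
    have := (hSbd _ hmaxS).2
    omega
  have hptsE2 : points E2 = P2 p m := by
    ext x
    rw [mem_P2]
    by_cases hx2 : x = 2
    · subst hx2; simp [h2E2]
    constructor
    · intro hx
      have hxS : x ∈ S := Finset.mem_erase.mpr ⟨hx2, hx⟩
      rw [hSIcc] at hxS
      simp only [Finset.mem_Icc] at hxS
      right; omega
    · intro hx
      have : x ∈ S := by
        rw [hSIcc]
        simp only [Finset.mem_Icc]
        omega
      exact (Finset.mem_erase.mp this).2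
  have hptsE1 : points E1 = P1 n p m := by
    ext x
    rw [P1, Finset.mem_sdiff, ← hptsE2]
    constructor
    · intro hx
      exact ⟨hptsub x (Or.inl hx), fun h => hptdisj x hx h⟩
    · rintro ⟨hx1, hx2⟩
      rcases hptsplit x hx1 with h | h
      · exact h
      · exact absurd h hx2
  refine ⟨m, p, E1, E2, hm1, hmn, hp2, hppm, ?_, ?_, hDunion⟩
  · refine ⟨hME1, hptsE1, ⟨r, hrE1⟩, ?_⟩
    intro a ha b hb
    exact (reach_symm (hE1reach a ha)).trans (hE1reach b hb)
  · refine ⟨hME2, hptsE2, ⟨s, hsE2⟩, ?_⟩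
    intro a ha b hb
    exact (reach_symm (hE2reach a ha)).trans (hE2reach b hb)

end ChordStmt


open scoped Classical

namespace ChordStmt

lemma mem_goodFinset {P : Finset ℕ} {D : Finset (ℕ × ℕ)} :
    D ∈ goodFinset P ↔ good P D := by
  simp only [goodFinset, Finset.mem_filter, Finset.mem_powerset]
  exact ⟨fun h => h.2, fun h => ⟨chords_sub h.2.1, h⟩⟩

noncomputable def idx (n : ℕ) :
    Finset ((_ : ℕ) × (_ : ℕ) × (Finset (ℕ × ℕ) × Finset (ℕ × ℕ))) :=
  (Finset.Ico 1 n).sigma fun m => (Finset.Icc 2 (2 * (n - m))).sigma fun p =>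
    (goodFinset (P1 n p m)) ×ˢ (goodFinset (P2 p m))

theorem card_eq {n : ℕ} (hn : 2 ≤ n) :
    c n = ∑ m ∈ Finset.Ico 1 n, (2 * (n - m) - 1) * (c (n - m) * c m) := by
  rw [c_eq_card]
  have hbij : (idx n).card = (goodFinset (Finset.Icc 1 (2 * n))).card := by
    apply Finset.card_bij (fun x _ => x.2.2.1 ∪ x.2.2.2)
    · rintro ⟨m, p, E1, E2⟩ hx
      simp only [idx, Finset.mem_sigma, Finset.mem_product, Finset.mem_Ico,
        Finset.mem_Icc, mem_goodFinset] at hx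
      obtain ⟨⟨hm1, hmn⟩, ⟨hp2, hple⟩, h1, h2⟩ := hx
      exact mem_goodFinset.mpr (union_good hm1 hmn hp2 (by omega) h1 h2)
    · rintro ⟨m, p, E1, E2⟩ hx ⟨m', p', E1', E2'⟩ hy heq
      simp only [idx, Finset.mem_sigma, Finset.mem_product, Finset.mem_Ico,
        Finset.mem_Icc, mem_goodFinset] at hx hy
      obtain ⟨⟨hm1, hmn⟩, ⟨hp2, hple⟩, h1, h2⟩ := hx
      obtain ⟨⟨hm1', hmn'⟩, ⟨hp2', hple'⟩, h1', h2'⟩ := hy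
      obtain ⟨hmm, hpp, hE1, hE2⟩ := union_inj hm1 hmn hp2 (by omega) h1 h2
        hm1' hmn' hp2' (by omega) h1' h2' heq
      subst hmm; subst hpp; subst hE1; subst hE2; rfl
    · intro D hD
      obtain ⟨m, p, E1, E2, hm1, hmn, hp2, hpm, h1, h2, hun⟩ :=
        decomp_exists hn (mem_goodFinset.mp hD)
      refine ⟨⟨m, p, (E1, E2)⟩, ?_, hun⟩
      simp only [idx, Finset.mem_sigma, Finset.mem_product, Finset.mem_Ico,
        Finset.mem_Icc, mem_goodFinset]
      exact ⟨⟨hm1, hmn⟩, ⟨hp2, by omega⟩, h1, h2⟩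
  rw [← hbij, idx, Finset.card_sigma]
  apply Finset.sum_congr rfl
  intro m hm
  simp only [Finset.mem_Ico] at hm
  rw [Finset.card_sigma]
  have hconst : ∀ p ∈ Finset.Icc 2 (2 * (n - m)),
      ((goodFinset (P1 n p m)) ×ˢ (goodFinset (P2 p m))).card = c (n - m) * c m := by
    intro p hp
    simp only [Finset.mem_Icc] at hp
    rw [Finset.card_product, card_good_P1 (by omega) (by omega) hp.1 (by omega),
      card_good_P2 (by omega) hp.1]
  rw [Finset.sum_congr rfl hconst, Finset.sum_const, Nat.card_Icc, smul_eq_mul]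
  have he : 2 * (n - m) + 1 - 2 = 2 * (n - m) - 1 := by omega
  rw [he]

theorem recurrence {n : ℕ} (hn : 2 ≤ n) :
    c n = (n - 1) * ∑ k ∈ Finset.Ico 1 n, c k * c (n - k) := by
  have h := card_eq hn
  have hre : ∑ m ∈ Finset.Ico 1 n, (2 * (n - m) - 1) * (c (n - m) * c m)
      = ∑ k ∈ Finset.Ico 1 n, (2 * k - 1) * (c k * c (n - k)) := by
    apply Finset.sum_nbij' (i := fun m => n - m) (j := fun k => n - k)
    · intro a ha; simp only [Finset.mem_Ico] at *; omega
    · intro a ha; simp only [Finset.mem_Ico] at *; omega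
    · intro a ha; simp only [Finset.mem_Ico] at ha; omega
    · intro a ha; simp only [Finset.mem_Ico] at ha; omega
    · intro a ha
      simp only [Finset.mem_Ico] at ha
      have : n - (n - a) = a := by omega
      rw [this]
  have h2 : 2 * c n = 2 * ((n - 1) * ∑ k ∈ Finset.Ico 1 n, c k * c (n - k)) := by
    calc 2 * c n
        = (∑ k ∈ Finset.Ico 1 n, (2 * k - 1) * (c k * c (n - k)))
          + ∑ m ∈ Finset.Ico 1 n, (2 * (n - m) - 1) * (c (n - m) * c m) := by
          rw [h, hre, two_mul]
      _ = ∑ k ∈ Finset.Ico 1 n, ((2 * k - 1) + (2 * (n - k) - 1)) * (c k * c (n - k)) := by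
          rw [← Finset.sum_add_distrib]
          apply Finset.sum_congr rfl
          intro k hk
          rw [mul_comm (c (n - k)) (c k), add_mul]
      _ = ∑ k ∈ Finset.Ico 1 n, (2 * n - 2) * (c k * c (n - k)) := by
          apply Finset.sum_congr rfl
          intro k hk
          simp only [Finset.mem_Ico] at hk
          congr 1
          omega
      _ = (2 * n - 2) * ∑ k ∈ Finset.Ico 1 n, c k * c (n - k) := by
          rw [Finset.mul_sum]
      _ = 2 * ((n - 1) * ∑ k ∈ Finset.Ico 1 n, c k * c (n - k)) := by
          rw [← mul_assoc]
          congr 1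
          omega
  omega

end ChordStmt



namespace ChordStmt

/-- `c 1 = 1` and, for `n ≥ 2`,
`c n = (n-1) · Σ_{k=1}^{n-1} c k · c (n-k)`. -/
theorem stmt0 :
    c 1 = 1 ∧ ∀ n : ℕ, 2 ≤ n →
      c n = (n - 1) * ∑ k ∈ Finset.Ico 1 n, c k * c (n - k) := by
  exact ⟨c_one, fun n hn => recurrence hn⟩

end ChordStmt
end

section
/- For all n ≥ 5, the sequence c_n defined by c_1 = 1 and c_n = (n-1) Σ_{k=1}^{n-1} c_k c_{n-k} satisfies (2n-1) · c_{n-1} < c_n < 2n · c_{n-1}. -/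
def Taux (c : ℕ → ℕ) (n : ℕ) : ℕ := ∑ k ∈ Finset.Ico 3 (n-2), c k * c (n-k)

lemma sum_reflect (c : ℕ → ℕ) (m : ℕ) :
    ∑ k ∈ Finset.Ico 3 (m-2), (m-k) * (c k * c (m-k))
      = ∑ k ∈ Finset.Ico 3 (m-2), k * (c k * c (m-k)) := by
  refine Finset.sum_nbij' (fun k => m - k) (fun k => m - k) ?_ ?_ ?_ ?_ ?_
  · intro a ha; simp only [Finset.mem_Ico] at *; omega
  · intro a ha; simp only [Finset.mem_Ico] at *; omega
  · intro a ha; simp only [Finset.mem_Ico] at ha; change m - (m - a) = a; omega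
  · intro a ha; simp only [Finset.mem_Ico] at ha; change m - (m - a) = a; omega
  · intro a ha
    simp only [Finset.mem_Ico] at ha
    change _ = (m - a) * (c (m-a) * c (m - (m-a)))
    have h : m - (m - a) = a := by omega
    rw [h, mul_comm (c a) (c (m-a))]

section
variable (c : ℕ → ℕ) (h1 : c 1 = 1)
    (hrec : ∀ n : ℕ, 2 ≤ n → c n = (n - 1) * ∑ k ∈ Finset.Ico 1 n, c k * c (n - k))

include h1 hrec in
lemma cpos : ∀ n : ℕ, 1 ≤ n → 0 < c n := by
  intro n
  induction n using Nat.strong_induction_on with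
  | _ n IH =>
    intro hn
    rcases eq_or_lt_of_le hn with h | h
    · rw [← h, h1]; norm_num
    · have h2 : 2 ≤ n := h
      rw [hrec n h2]
      have hmem : 1 ∈ Finset.Ico 1 n := by simp only [Finset.mem_Ico]; omega
      have hterm : 0 < c 1 * c (n - 1) := by
        have := IH (n-1) (by omega) (by omega)
        rw [h1]; simpa using this
      have hsum : 0 < ∑ k ∈ Finset.Ico 1 n, c k * c (n - k) :=
        lt_of_lt_of_le hterm (Finset.single_le_sum (f := fun k => c k * c (n - k))
          (fun i _ => Nat.zero_le _) hmem)
      exact Nat.mul_pos (by omega) hsum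

include h1 hrec in
lemma clow : ∀ n : ℕ, 3 ≤ n → 2 * (n-1) * c (n-1) ≤ c n := by
  intro n hn
  rw [hrec n (by omega)]
  have hsub : ({1, n-1} : Finset ℕ) ⊆ Finset.Ico 1 n := by
    intro x hx; simp only [Finset.mem_insert, Finset.mem_singleton] at hx
    simp only [Finset.mem_Ico]; omega
  have hsum : ∑ k ∈ ({1, n-1} : Finset ℕ), c k * c (n - k)
      ≤ ∑ k ∈ Finset.Ico 1 n, c k * c (n - k) :=
    Finset.sum_le_sum_of_subset hsub
  have hne : (1:ℕ) ∉ ({n-1} : Finset ℕ) := by simp; omega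
  rw [Finset.sum_insert hne, Finset.sum_singleton] at hsum
  have e1 : n - (n-1) = 1 := by omega
  rw [e1, h1] at hsum
  simp only [one_mul, mul_one] at hsum
  calc 2 * (n-1) * c (n-1) = (n-1) * (c (n-1) + c (n-1)) := by ring
  _ ≤ (n-1) * ∑ k ∈ Finset.Ico 1 n, c k * c (n - k) := Nat.mul_le_mul_left _ hsum

include h1 in
lemma decomp (h2 : c 2 = 1)
    (hrec : ∀ n : ℕ, 2 ≤ n → c n = (n - 1) * ∑ k ∈ Finset.Ico 1 n, c k * c (n - k)) :
    ∀ n : ℕ, 5 ≤ n →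
    c n = (n-1) * (2 * c (n-1) + 2 * c (n-2) + Taux c n) := by
  intro n hn
  obtain ⟨m, rfl⟩ : ∃ m, n = m + 5 := ⟨n - 5, by omega⟩
  rw [hrec (m+5) (by omega)]
  congr 1
  have e1 : m + 5 = (m+4) + 1 := by omega
  rw [e1, Finset.sum_Ico_succ_top (by omega)]
  have e2 : m + 4 = (m+3) + 1 := by omega
  rw [e2, Finset.sum_Ico_succ_top (by omega)]
  rw [Finset.sum_eq_sum_Ico_succ_bot (by omega : 1 < m + 3)]
  rw [Finset.sum_eq_sum_Ico_succ_bot (by omega : 1 + 1 < m + 3)]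
  have e3 : m + 3 + 1 + 1 - (m + 3) = 2 := by omega
  have e4 : m + 3 + 1 + 1 - (m + 4) = 1 := by omega
  have e5 : m + 3 + 1 + 1 - 1 = m + 4 := by omega
  have e6 : m + 3 + 1 + 1 - (1+1) = m + 3 := by omega
  rw [e3, e4, e5, e6, h1, h2]
  have e7 : Taux c (m+5) = ∑ k ∈ Finset.Ico 3 (m+3), c k * c (m + 3 + 1 + 1 - k) := by
    rfl
  rw [e7]
  ring

include h1 hrec in
lemma cvals :
    c 2 = 1 ∧ c 3 = 4 ∧ c 4 = 27 ∧ c 5 = 248 ∧ c 6 = 2830 ∧ c 7 = 38232 ∧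
    c 8 = 593859 ∧ c 9 = 10401712 ∧ c 10 = 202601898 := by
  have h2 : c 2 = 1 := by
    rw [hrec 2 (by norm_num)]
    simp [Finset.sum_Ico_eq_sum_range, Finset.sum_range_succ, h1]
  have h3 : c 3 = 4 := by
    rw [hrec 3 (by norm_num)]
    simp [Finset.sum_Ico_eq_sum_range, Finset.sum_range_succ, h1, h2]
  have h4 : c 4 = 27 := by
    rw [hrec 4 (by norm_num)]
    simp [Finset.sum_Ico_eq_sum_range, Finset.sum_range_succ, h1, h2, h3]
  have h5 : c 5 = 248 := by
    rw [hrec 5 (by norm_num)]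
    simp [Finset.sum_Ico_eq_sum_range, Finset.sum_range_succ, h1, h2, h3, h4]
  have h6 : c 6 = 2830 := by
    rw [hrec 6 (by norm_num)]
    simp [Finset.sum_Ico_eq_sum_range, Finset.sum_range_succ, h1, h2, h3, h4, h5]
  have h7 : c 7 = 38232 := by
    rw [hrec 7 (by norm_num)]
    simp [Finset.sum_Ico_eq_sum_range, Finset.sum_range_succ, h1, h2, h3, h4, h5, h6]
  have h8 : c 8 = 593859 := by
    rw [hrec 8 (by norm_num)]
    simp [Finset.sum_Ico_eq_sum_range, Finset.sum_range_succ, h1, h2, h3, h4, h5, h6, h7]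
  have h9 : c 9 = 10401712 := by
    rw [hrec 9 (by norm_num)]
    simp [Finset.sum_Ico_eq_sum_range, Finset.sum_range_succ, h1, h2, h3, h4, h5, h6, h7, h8]
  have h10 : c 10 = 202601898 := by
    rw [hrec 10 (by norm_num)]
    simp [Finset.sum_Ico_eq_sum_range, Finset.sum_range_succ, h1, h2, h3, h4, h5, h6, h7, h8, h9]
  exact ⟨h2, h3, h4, h5, h6, h7, h8, h9, h10⟩

include h1 hrec in
lemma mainlem : ∀ n : ℕ, (2 ≤ n → c n < 2 * n * c (n-1)) ∧ (6 ≤ n → Taux c n ≤ 16 * c (n-3)) := by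
  obtain ⟨h2, h3, h4, h5, h6, h7, h8, h9, h10⟩ := cvals c h1 hrec
  intro n
  induction n using Nat.strong_induction_on with
  | _ n IH =>
    have hF : 6 ≤ n → Taux c n ≤ 16 * c (n-3) := by
      intro hn
      rcases le_or_gt n 13 with hle | hgt
      · interval_cases n <;>
          norm_num [Taux, Finset.sum_Ico_eq_sum_range, Finset.sum_range_succ,
            h3, h4, h5, h6, h7, h8, h9, h10]
      · obtain ⟨m, rfl⟩ : ∃ m, n = m + 14 := ⟨n - 14, by omega⟩
        have hsplit : Taux c (m+14)
            = (∑ k ∈ Finset.Ico 3 (m+11), c k * c (m+14-k)) + c (m+11) * c 3 := by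
          have : Taux c (m+14) = ∑ k ∈ Finset.Ico 3 ((m+11)+1), c k * c (m+14-k) := rfl
          rw [this, Finset.sum_Ico_succ_top (by omega)]
          have e : m+14-(m+11) = 3 := by omega
          rw [e]
        have hsum1 : (∑ k ∈ Finset.Ico 3 (m+11), c k * c (m+14-k))
            ≤ ∑ k ∈ Finset.Ico 3 (m+11), (2*(m+13-k)+2) * (c k * c (m+13-k)) := by
          apply Finset.sum_le_sum
          intro k hk
          simp only [Finset.mem_Ico] at hk
          have hU : c (m+14-k) < 2*(m+14-k) * c (m+14-k-1) :=
            (IH (m+14-k) (by omega)).1 (by omega)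
          have e1 : m+14-k-1 = m+13-k := by omega
          have e2 : 2*(m+14-k) = 2*(m+13-k)+2 := by omega
          rw [e1, e2] at hU
          calc c k * c (m+14-k) ≤ c k * ((2*(m+13-k)+2) * c (m+13-k)) :=
                Nat.mul_le_mul_left _ (le_of_lt hU)
          _ = (2*(m+13-k)+2) * (c k * c (m+13-k)) := by ring
        have hrefl : (∑ k ∈ Finset.Ico 3 (m+11), (m+13-k) * (c k * c (m+13-k)))
            = ∑ k ∈ Finset.Ico 3 (m+11), k * (c k * c (m+13-k)) :=
          sum_reflect c (m+13)
        have hsum2 : ∑ k ∈ Finset.Ico 3 (m+11), (2*(m+13-k)+2) * (c k * c (m+13-k))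
            = (m+15) * Taux c (m+13) := by
          calc ∑ k ∈ Finset.Ico 3 (m+11), (2*(m+13-k)+2) * (c k * c (m+13-k))
              = ∑ k ∈ Finset.Ico 3 (m+11),
                ((m+13-k) * (c k * c (m+13-k)) + ((m+13-k) * (c k * c (m+13-k))
                  + 2 * (c k * c (m+13-k)))) := by
                apply Finset.sum_congr rfl
                intro k hk; ring
          _ = (∑ k ∈ Finset.Ico 3 (m+11), (m+13-k) * (c k * c (m+13-k)))
              + ((∑ k ∈ Finset.Ico 3 (m+11), (m+13-k) * (c k * c (m+13-k)))
                + ∑ k ∈ Finset.Ico 3 (m+11), 2 * (c k * c (m+13-k))) := by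
                rw [Finset.sum_add_distrib, Finset.sum_add_distrib]
          _ = (∑ k ∈ Finset.Ico 3 (m+11), (m+13-k) * (c k * c (m+13-k)))
              + ((∑ k ∈ Finset.Ico 3 (m+11), k * (c k * c (m+13-k)))
                + ∑ k ∈ Finset.Ico 3 (m+11), 2 * (c k * c (m+13-k))) := by rw [hrefl]
          _ = ∑ k ∈ Finset.Ico 3 (m+11),
                ((m+13-k) * (c k * c (m+13-k)) + (k * (c k * c (m+13-k))
                  + 2 * (c k * c (m+13-k)))) := by
                rw [Finset.sum_add_distrib, Finset.sum_add_distrib]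
          _ = ∑ k ∈ Finset.Ico 3 (m+11), (m+15) * (c k * c (m+13-k)) := by
                apply Finset.sum_congr rfl
                intro k hk
                simp only [Finset.mem_Ico] at hk
                have e : m+13-k+k = m+13 := by omega
                calc (m+13-k) * (c k * c (m+13-k)) + (k * (c k * c (m+13-k))
                    + 2 * (c k * c (m+13-k)))
                    = ((m+13-k)+k+2) * (c k * c (m+13-k)) := by ring
                _ = (m+15) * (c k * c (m+13-k)) := by
                      congr 1
                      omega
          _ = (m+15) * Taux c (m+13) := by rw [← Finset.mul_sum]; rfl
        have hTrec : Taux c (m+14) ≤ (m+15) * Taux c (m+13) + c (m+11) * c 3 := by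
          rw [hsplit]
          exact Nat.add_le_add_right (hsum1.trans (le_of_eq hsum2)) _
        have hIH2 : Taux c (m+13) ≤ 16 * c (m+10) := (IH (m+13) (by omega)).2 (by omega)
        have hlow : 2 * (m+10) * c (m+10) ≤ c (m+11) := clow c h1 hrec (m+11) (by omega)
        have hmain : (m+15) * (16 * c (m+10)) ≤ 12 * c (m+11) := by
          calc (m+15) * (16 * c (m+10)) = (16*m+240) * c (m+10) := by ring
          _ ≤ (24*m+240) * c (m+10) := Nat.mul_le_mul_right _ (by omega)
          _ = 12 * (2*(m+10) * c (m+10)) := by ring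
          _ ≤ 12 * c (m+11) := Nat.mul_le_mul_left _ hlow
        have : Taux c (m+14) ≤ 16 * c (m+11) := by
          have h' : (m+15) * Taux c (m+13) ≤ (m+15) * (16 * c (m+10)) :=
            Nat.mul_le_mul_left _ hIH2
          rw [h3] at hTrec
          omega
        exact this
    have hU : 2 ≤ n → c n < 2 * n * c (n-1) := by
      intro hn
      rcases le_or_gt n 8 with hle | hgt
      · interval_cases n <;> norm_num [h1, h2, h3, h4, h5, h6, h7, h8]
      · obtain ⟨m, rfl⟩ : ∃ m, n = m + 9 := ⟨n - 9, by omega⟩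
        have hd : c (m+9) = (m+8) * (2 * c (m+8) + 2 * c (m+7) + Taux c (m+9)) :=
          decomp c h1 h2 hrec (m+9) (by omega)
        have hT : Taux c (m+9) ≤ 16 * c (m+6) := hF (by omega)
        have hlow1 : 2*(m+7)*c (m+7) ≤ c (m+8) := clow c h1 hrec (m+8) (by omega)
        have hlow2 : 2*(m+6)*c (m+6) ≤ c (m+7) := clow c h1 hrec (m+7) (by omega)
        have hpos : 0 < c (m+7) := cpos c h1 hrec (m+7) (by omega)
        have hkey : (m+8) * Taux c (m+9) < 2*(m+6) * c (m+7) := by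
          have a1 : (m+6) * Taux c (m+9) ≤ 8 * c (m+7) := by
            calc (m+6) * Taux c (m+9) ≤ (m+6) * (16 * c (m+6)) := Nat.mul_le_mul_left _ hT
            _ = 8 * (2*(m+6)*c (m+6)) := by ring
            _ ≤ 8 * c (m+7) := Nat.mul_le_mul_left _ hlow2
          have e1 : (m+6) * ((m+8) * Taux c (m+9)) < (m+6) * (2*(m+6) * c (m+7)) := by
            calc (m+6) * ((m+8) * Taux c (m+9)) = (m+8) * ((m+6) * Taux c (m+9)) := by ring
            _ ≤ (m+8) * (8 * c (m+7)) := Nat.mul_le_mul_left _ a1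
            _ = (8*(m+8)) * c (m+7) := by ring
            _ < (2*(m+6)*(m+6)) * c (m+7) := by
                apply mul_lt_mul_of_pos_right _ hpos
                nlinarith
            _ = (m+6) * (2*(m+6) * c (m+7)) := by ring
          exact lt_of_mul_lt_mul_left e1 (Nat.zero_le _)
        show c (m+9) < 2 * (m+9) * c (m+8)
        rw [hd]
        have hkey' : (m+8) * Taux c (m+9) < (2*m+12) * c (m+7) := by
          calc (m+8) * Taux c (m+9) < 2*(m+6) * c (m+7) := hkey
          _ = (2*m+12) * c (m+7) := by ring
        calc (m+8) * (2 * c (m+8) + 2 * c (m+7) + Taux c (m+9))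
            = (2*(m+8)*c (m+8) + (2*m+16)*c (m+7)) + (m+8)*Taux c (m+9) := by ring
        _ < (2*(m+8)*c (m+8) + (2*m+16)*c (m+7)) + (2*m+12)*c (m+7) :=
            Nat.add_lt_add_left hkey' _
        _ = 2*(m+8)*c (m+8) + 2*(2*(m+7)*c (m+7)) := by ring
        _ ≤ 2*(m+8)*c (m+8) + 2*c (m+8) :=
            Nat.add_le_add_left (Nat.mul_le_mul_left _ hlow1) _
        _ = 2*(m+9)*c (m+8) := by ring
    exact ⟨hU, hF⟩

end

/-- with `c 1 = 1` and `c n = (n-1)·Σ_{k=1}^{n-1} c k·c (n-k)` for `n ≥ 2`,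
for all `n ≥ 5` one has `(2n-1)·c (n-1) < c n < 2n·c (n-1)`. -/
theorem stmt2 (c : ℕ → ℕ) (h1 : c 1 = 1)
    (hrec : ∀ n : ℕ, 2 ≤ n → c n = (n - 1) * ∑ k ∈ Finset.Ico 1 n, c k * c (n - k)) :
    ∀ n : ℕ, 5 ≤ n → (2 * n - 1) * c (n - 1) < c n ∧ c n < 2 * n * c (n - 1) := by
  intro n hn
  obtain ⟨hc2, hc3, hc4, hc5, hc6, hc7, hc8, hc9, hc10⟩ := cvals c h1 hrec
  constructor
  · obtain ⟨m, rfl⟩ : ∃ m, n = m + 5 := ⟨n - 5, by omega⟩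
    have hd : c (m+5) = (m+4) * (2 * c (m+4) + 2 * c (m+3) + Taux c (m+5)) :=
      decomp c h1 hc2 hrec (m+5) (by omega)
    have hU4 : c (m+4) < 2*(m+4) * c (m+3) := (mainlem c h1 hrec (m+4)).1 (by omega)
    show (2*(m+5)-1) * c (m+4) < c (m+5)
    have e : 2*(m+5)-1 = 2*m+9 := by omega
    rw [e, hd]
    calc (2*m+9) * c (m+4) = (2*m+8)*c (m+4) + c (m+4) := by ring
    _ < (2*m+8)*c (m+4) + 2*(m+4)*c (m+3) := Nat.add_lt_add_left hU4 _
    _ = (m+4) * (2*c (m+4) + 2*c (m+3)) := by ring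
    _ ≤ (m+4) * (2 * c (m+4) + 2 * c (m+3) + Taux c (m+5)) :=
        Nat.mul_le_mul_left _ (by omega)
  · exact (mainlem c h1 hrec n).1 (by omega)
end

section
/- Let c_n be defined by c_1 = 1 and c_n = (n-1) Σ_{k=1}^{n-1} c_k c_{n-k}. For every n ≥ 8 and every k with 2 ≤ k ≤ ⌊n/2⌋, one has c_k · c_{n-k} ≤ c_{k-1} · c_{n-k+1}. -/
section Aux

variable {c : ℕ → ℕ}

lemma aux_pos (h1 : c 1 = 1)
    (hrec : ∀ n : ℕ, 2 ≤ n → c n = (n - 1) * ∑ k ∈ Finset.Ico 1 n, c k * c (n - k)) :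
    ∀ m : ℕ, 1 ≤ m → 1 ≤ c m := by
  intro m hm
  induction m, hm using Nat.le_induction with
  | base => omega
  | succ n hn ih =>
    have h := hrec (n + 1) (by omega)
    have hmem : n ∈ Finset.Ico 1 (n + 1) := by
      simp only [Finset.mem_Ico]
      omega
    have hsingle := Finset.single_le_sum (f := fun k => c k * c (n + 1 - k))
      (fun i _ => Nat.zero_le _) hmem
    simp only [show n + 1 - n = 1 from by omega, h1, mul_one] at hsingle
    calc (1 : ℕ) = 1 * 1 := rfl
      _ ≤ n * ∑ k ∈ Finset.Ico 1 (n + 1), c k * c (n + 1 - k) :=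
          Nat.mul_le_mul hn (ih.trans hsingle)
      _ = c (n + 1) := by rw [h]; norm_num

lemma aux_low (h1 : c 1 = 1)
    (hrec : ∀ n : ℕ, 2 ≤ n → c n = (n - 1) * ∑ k ∈ Finset.Ico 1 n, c k * c (n - k)) :
    ∀ m : ℕ, 3 ≤ m → 2 * (m - 1) * c (m - 1) ≤ c m := by
  intro m hm
  have h := hrec m (by omega)
  have hsub : ({1, m - 1} : Finset ℕ) ⊆ Finset.Ico 1 m := by
    intro x hx
    simp only [Finset.mem_insert, Finset.mem_singleton] at hx
    simp only [Finset.mem_Ico]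
    omega
  have hpair : ∑ k ∈ ({1, m - 1} : Finset ℕ), c k * c (m - k)
      ≤ ∑ k ∈ Finset.Ico 1 m, c k * c (m - k) :=
    Finset.sum_le_sum_of_subset hsub
  rw [Finset.sum_pair (show (1 : ℕ) ≠ m - 1 from by omega)] at hpair
  rw [show m - (m - 1) = 1 from by omega, h1, one_mul, mul_one] at hpair
  calc 2 * (m - 1) * c (m - 1) = (m - 1) * (c (m - 1) + c (m - 1)) := by ring
    _ ≤ (m - 1) * ∑ k ∈ Finset.Ico 1 m, c k * c (m - k) :=
        Nat.mul_le_mul_left _ hpair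
    _ = c m := h.symm

lemma aux_vals (h1 : c 1 = 1)
    (hrec : ∀ n : ℕ, 2 ≤ n → c n = (n - 1) * ∑ k ∈ Finset.Ico 1 n, c k * c (n - k)) :
    c 2 = 1 ∧ c 3 = 4 ∧ c 4 = 27 ∧ c 5 = 248 ∧ c 6 = 2830 ∧ c 7 = 38232 := by
  have e2 := hrec 2 (by norm_num)
  rw [show Finset.Ico 1 2 = {1} from rfl] at e2
  simp [h1] at e2
  have e3 := hrec 3 (by norm_num)
  rw [show Finset.Ico 1 3 = {1, 2} from rfl] at e3
  simp [Finset.sum_insert, h1, e2] at e3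
  have e4 := hrec 4 (by norm_num)
  rw [show Finset.Ico 1 4 = {1, 2, 3} from rfl] at e4
  simp [Finset.sum_insert, h1, e2, e3] at e4
  have e5 := hrec 5 (by norm_num)
  rw [show Finset.Ico 1 5 = {1, 2, 3, 4} from rfl] at e5
  simp [Finset.sum_insert, h1, e2, e3, e4] at e5
  have e6 := hrec 6 (by norm_num)
  rw [show Finset.Ico 1 6 = {1, 2, 3, 4, 5} from rfl] at e6
  simp [Finset.sum_insert, h1, e2, e3, e4, e5] at e6
  have e7 := hrec 7 (by norm_num)
  rw [show Finset.Ico 1 7 = {1, 2, 3, 4, 5, 6} from rfl] at e7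
  simp [Finset.sum_insert, h1, e2, e3, e4, e5, e6] at e7
  exact ⟨e2, e3, e4, e5, e6, e7⟩

lemma aux_key (h1 : c 1 = 1)
    (hrec : ∀ n : ℕ, 2 ≤ n → c n = (n - 1) * ∑ k ∈ Finset.Ico 1 n, c k * c (n - k)) :
    ∀ n : ℕ, (2 ≤ n → c n ≤ 2 * n * c (n - 1)) ∧
      (8 ≤ n → ∀ k, 2 ≤ k → k ≤ n / 2 → c k * c (n - k) ≤ c (k - 1) * c (n - k + 1)) := by
  obtain ⟨e2, e3, e4, e5, e6, e7⟩ := aux_vals h1 hrec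
  intro n
  induction n using Nat.strong_induction_on with
  | _ n IH =>
    have hP : 8 ≤ n → ∀ k, 2 ≤ k → k ≤ n / 2 →
        c k * c (n - k) ≤ c (k - 1) * c (n - k + 1) := by
      intro hn k hk2 hk
      have hkn : k < n := by omega
      have hU := (IH k hkn).1 hk2
      have hL := aux_low h1 hrec (n - k + 1) (by omega)
      rw [show n - k + 1 - 1 = n - k from by omega] at hL
      calc c k * c (n - k) ≤ 2 * k * c (k - 1) * c (n - k) :=
            Nat.mul_le_mul_right _ hU
        _ ≤ 2 * (n - k) * c (k - 1) * c (n - k) := by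
            have h2k : 2 * k ≤ 2 * (n - k) := by omega
            exact Nat.mul_le_mul_right _ (Nat.mul_le_mul_right _ h2k)
        _ = c (k - 1) * (2 * (n - k) * c (n - k)) := by ring
        _ ≤ c (k - 1) * c (n - k + 1) := Nat.mul_le_mul_left _ hL
    refine ⟨?_, hP⟩
    intro hn2
    by_cases h8 : 8 ≤ n
    · -- large case
      obtain ⟨m, rfl⟩ : ∃ m, n = m + 8 := ⟨n - 8, by omega⟩
      have hchain : ∀ j, 3 ≤ j → j ≤ (m + 8) / 2 →
          c j * c (m + 8 - j) ≤ c 3 * c (m + 5) := by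
        intro j hj3 hj
        induction j, hj3 using Nat.le_induction with
        | base => simp [show m + 8 - 3 = m + 5 from by omega]
        | succ j hj3' ih =>
          have h' := hP h8 (j + 1) (by omega) hj
          rw [show m + 8 - (j + 1) + 1 = m + 8 - j from by omega,
              show j + 1 - 1 = j from rfl] at h'
          exact h'.trans (ih (by omega))
      have hall : ∀ k ∈ Finset.Ico 3 (m + 6), c k * c (m + 8 - k) ≤ c 3 * c (m + 5) := by
        intro k hk
        simp only [Finset.mem_Ico] at hk
        rcases le_or_gt k ((m + 8) / 2) with h | h
        · exact hchain k hk.1 h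
        · have := hchain (m + 8 - k) (by omega) (by omega)
          rw [show m + 8 - (m + 8 - k) = k from by omega] at this
          rw [mul_comm]
          exact this
      have hS := hrec (m + 8) (by omega)
      have hsplit1 : ∑ k ∈ Finset.Ico 1 3, c k * c (m + 8 - k)
          + ∑ k ∈ Finset.Ico 3 (m + 6), c k * c (m + 8 - k)
          = ∑ k ∈ Finset.Ico 1 (m + 6), c k * c (m + 8 - k) :=
        Finset.sum_Ico_consecutive _ (by omega) (by omega)
      have hsplit2 : ∑ k ∈ Finset.Ico 1 (m + 6), c k * c (m + 8 - k)
          + ∑ k ∈ Finset.Ico (m + 6) (m + 8), c k * c (m + 8 - k)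
          = ∑ k ∈ Finset.Ico 1 (m + 8), c k * c (m + 8 - k) :=
        Finset.sum_Ico_consecutive _ (by omega) (by omega)
      have h13 : ∑ k ∈ Finset.Ico 1 3, c k * c (m + 8 - k)
          = c (m + 7) + c (m + 6) := by
        rw [show Finset.Ico 1 3 = {1, 2} from rfl]
        simp [h1, e2, show m + 8 - 1 = m + 7 from by omega,
          show m + 8 - 2 = m + 6 from by omega]
      have hend : ∑ k ∈ Finset.Ico (m + 6) (m + 8), c k * c (m + 8 - k)
          = c (m + 6) + c (m + 7) := by
        rw [show m + 8 = (m + 7) + 1 from rfl, Finset.sum_Ico_succ_top (by omega),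
            show m + 7 = (m + 6) + 1 from rfl, Finset.sum_Ico_succ_top (by omega)]
        simp [h1, e2, show m + 6 + 1 + 1 - (m + 6) = 2 from by omega,
          show m + 6 + 1 + 1 - (m + 6 + 1) = 1 from by omega]
      have hmid : ∑ k ∈ Finset.Ico 3 (m + 6), c k * c (m + 8 - k)
          ≤ (m + 3) * (c 3 * c (m + 5)) := by
        calc ∑ k ∈ Finset.Ico 3 (m + 6), c k * c (m + 8 - k)
            ≤ (Finset.Ico 3 (m + 6)).card • (c 3 * c (m + 5)) :=
              Finset.sum_le_card_nsmul _ _ _ hall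
          _ = (m + 3) * (c 3 * c (m + 5)) := by
              rw [Nat.card_Ico, smul_eq_mul, show m + 6 - 3 = m + 3 from by omega]
      have hsum : ∑ k ∈ Finset.Ico 1 (m + 8), c k * c (m + 8 - k)
          ≤ 2 * c (m + 7) + 2 * c (m + 6) + 4 * (m + 3) * c (m + 5) := by
        rw [← hsplit2, ← hsplit1, h13, hend]
        have h' := hmid
        rw [e3, show (m + 3) * (4 * c (m + 5)) = 4 * (m + 3) * c (m + 5) from by ring] at h'
        omega
      have hb := aux_low h1 hrec (m + 6) (by omega)
      have hd := aux_low h1 hrec (m + 7) (by omega)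
      rw [show m + 6 - 1 = m + 5 from by omega] at hb
      rw [show m + 7 - 1 = m + 6 from by omega] at hd
      rw [show m + 8 - 1 = m + 7 from by omega]
      calc c (m + 8) = (m + 8 - 1) * ∑ k ∈ Finset.Ico 1 (m + 8), c k * c (m + 8 - k) := hS
        _ = (m + 7) * ∑ k ∈ Finset.Ico 1 (m + 8), c k * c (m + 8 - k) := by norm_num
        _ ≤ (m + 7) * (2 * c (m + 7) + 2 * c (m + 6) + 4 * (m + 3) * c (m + 5)) :=
            Nat.mul_le_mul_left _ hsum
        _ ≤ 2 * (m + 8) * c (m + 7) := by nlinarith [hb, hd, Nat.zero_le (c (m + 5))]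
    · -- small cases
      interval_cases n
      · rw [e2, show (2 : ℕ) - 1 = 1 from rfl, h1]; norm_num
      · rw [e3, show (3 : ℕ) - 1 = 2 from rfl, e2]; norm_num
      · rw [e4, show (4 : ℕ) - 1 = 3 from rfl, e3]; norm_num
      · rw [e5, show (5 : ℕ) - 1 = 4 from rfl, e4]; norm_num
      · rw [e6, show (6 : ℕ) - 1 = 5 from rfl, e5]; norm_num
      · rw [e7, show (7 : ℕ) - 1 = 6 from rfl, e6]; norm_num

end Aux

/-- with `c 1 = 1` and `c n = (n-1)·Σ_{k=1}^{n-1} c k·c (n-k)` for `n ≥ 2`,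
for every `n ≥ 8` and every `k` with `2 ≤ k ≤ ⌊n/2⌋`, one has
`c k · c (n-k) ≤ c (k-1) · c (n-k+1)`. -/
theorem stmt3 (c : ℕ → ℕ) (h1 : c 1 = 1)
    (hrec : ∀ n : ℕ, 2 ≤ n → c n = (n - 1) * ∑ k ∈ Finset.Ico 1 n, c k * c (n - k)) :
    ∀ n k : ℕ, 8 ≤ n → 2 ≤ k → k ≤ n / 2 →
      c k * c (n - k) ≤ c (k - 1) * c (n - k + 1) := by
  intro n k hn hk2 hk
  exact (aux_key h1 hrec n).2 hn k hk2 hk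
end

section
/- The number of connected chord diagrams with n chords having exactly one terminal chord is (2n-3)!! (for n ≥ 1, with the convention (-1)!! = 1). -/
open scoped Classical

namespace ChordStmt

/-- The key reformulation predicate: every chord not ending at `2n` has an outgoing edge. -/
def Good (n : ℕ) (D : Finset (ℕ × ℕ)) : Prop :=
  IsDiagramOn n D ∧ ∀ p ∈ D, p.2 ≠ 2 * n → ∃ q ∈ D, crosses p q

lemma mem_points {D : Finset (ℕ × ℕ)} {x : ℕ} :
    x ∈ points D ↔ ∃ p ∈ D, x = p.1 ∨ x = p.2 := by
  simp [points]

lemma endpoint_bounds {n : ℕ} {D : Finset (ℕ × ℕ)} (h : IsDiagramOn n D)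
    {p : ℕ × ℕ} (hp : p ∈ D) : 1 ≤ p.1 ∧ p.1 < p.2 ∧ p.2 ≤ 2 * n := by
  have h1 : p.1 ∈ points D := mem_points.2 ⟨p, hp, Or.inl rfl⟩
  have h2 : p.2 ∈ points D := mem_points.2 ⟨p, hp, Or.inr rfl⟩
  rw [h.2, Finset.mem_Icc] at h1 h2
  exact ⟨h1.1, h.1.1 p hp, h2.2⟩

lemma exists_top {n : ℕ} {D : Finset (ℕ × ℕ)} (h : IsDiagramOn n D) (hn : 1 ≤ n) :
    ∃ t ∈ D, t.2 = 2 * n := by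
  have : (2 * n) ∈ points D := by rw [h.2, Finset.mem_Icc]; omega
  obtain ⟨p, hp, hor⟩ := mem_points.1 this
  rcases hor with h1 | h2
  · have := endpoint_bounds h hp; omega
  · exact ⟨p, hp, h2.symm⟩

lemma top_unique {n : ℕ} {D : Finset (ℕ × ℕ)} (h : IsDiagramOn n D)
    {p q : ℕ × ℕ} (hp : p ∈ D) (hq : q ∈ D) (he : p.2 = q.2) : p = q := by
  by_contra hne
  exact (h.1.2 p hp q hq hne).2.2.2 he

lemma top_terminal {n : ℕ} {D : Finset (ℕ × ℕ)} (h : IsDiagramOn n D)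
    {t : ℕ × ℕ} (ht : t ∈ D) (h2 : t.2 = 2 * n) : IsTerminal D t := by
  refine ⟨ht, fun q hq hc => ?_⟩
  have := endpoint_bounds h hq
  have := hc.2.2
  omega

lemma step_symm_s6 {D : Finset (ℕ × ℕ)} : Symmetric (Step D) := by
  rintro a b ⟨ha, hb, hc⟩
  exact ⟨hb, ha, hc.symm⟩

lemma reach_top {n : ℕ} {D : Finset (ℕ × ℕ)} (hg : Good n D)
    {t : ℕ × ℕ} (ht : t ∈ D) (ht2 : t.2 = 2 * n) :
    ∀ p ∈ D, Reach D p t := by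
  have key : ∀ k, ∀ p ∈ D, 2 * n - p.2 ≤ k → Reach D p t := by
    intro k
    induction k with
    | zero =>
      intro p hp hk
      have hb := endpoint_bounds hg.1 hp
      have : p.2 = 2 * n := by omega
      have : p = t := top_unique hg.1 hp ht (by omega)
      rw [this]; exact Relation.ReflTransGen.refl
    | succ k ih =>
      intro p hp hk
      by_cases h2 : p.2 = 2 * n
      · have : p = t := top_unique hg.1 hp ht (by omega)
        rw [this]; exact Relation.ReflTransGen.refl
      · obtain ⟨q, hq, hc⟩ := hg.2 p hp h2
        have hb := endpoint_bounds hg.1 hq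
        have h25 := hc.2.2
        exact Relation.ReflTransGen.head ⟨hp, hq, Or.inl hc⟩ (ih q hq (by omega))
  intro p hp
  have hb := endpoint_bounds hg.1 hp
  exact key (2 * n) p hp (by omega)

/-- Part A: the target set is exactly the set of `Good` diagrams. -/
lemma set_eq_good (n : ℕ) (hn : 1 ≤ n) :
    {D : Finset (ℕ × ℕ) |
        IsDiagramOn n D ∧ ConnectedDiagram D ∧ ∃! p, IsTerminal D p}
      = {D : Finset (ℕ × ℕ) | Good n D} := by
  ext D
  simp only [Set.mem_setOf_eq]
  constructor
  · rintro ⟨hd, hconn, p0, hp0, huniq⟩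
    obtain ⟨t, ht, ht2⟩ := exists_top hd hn
    have htt : IsTerminal D t := top_terminal hd ht ht2
    refine ⟨hd, fun p hp hne => ?_⟩
    have hpt : p ≠ t := fun h => hne (h ▸ ht2)
    by_contra hno
    push_neg at hno
    have hterm : IsTerminal D p := ⟨hp, hno⟩
    have := (huniq p hterm).trans (huniq t htt).symm
    exact hpt this
  · rintro ⟨hd, hcr⟩
    obtain ⟨t, ht, ht2⟩ := exists_top hd hn
    have hg : Good n D := ⟨hd, hcr⟩
    have hreach := reach_top hg ht ht2
    refine ⟨hd, ⟨⟨t, ht⟩, fun p hp q hq => ?_⟩, t, top_terminal hd ht ht2, ?_⟩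
    · exact (hreach p hp).trans (by haveI : Std.Symm (Step D) := ⟨fun a b h => step_symm_s6 h⟩; exact Std.Symm.symm _ _ (hreach q hq))
    · rintro p ⟨hp, hnc⟩
      by_cases h2 : p.2 = 2 * n
      · exact top_unique hd hp ht (by omega)
      · obtain ⟨q, hq, hc⟩ := hcr p hp h2
        exact absurd hc (hnc q hq)


/-! ### The insertion/deletion maps -/

/-- Insertion relabeling: maps old point `y` (of a diagram on `2N` points) to its new
position after inserting a point at position 1 and a point at position `m`. -/
def gmap (m y : ℕ) : ℕ := if y + 1 < m then y + 1 else y + 2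

/-- Deletion relabeling: inverse of `gmap`. -/
def fmap (m x : ℕ) : ℕ := if m < x then x - 2 else x - 1

def gpair (m : ℕ) (p : ℕ × ℕ) : ℕ × ℕ := (gmap m p.1, gmap m p.2)

def fpair (m : ℕ) (p : ℕ × ℕ) : ℕ × ℕ := (fmap m p.1, fmap m p.2)

/-- Insert the chord `(1, m)` into a diagram. -/
def up (m : ℕ) (M : Finset (ℕ × ℕ)) : Finset (ℕ × ℕ) :=
  insert (1, m) (M.image (gpair m))

/-- Delete the chord `(1, m)` from a diagram. -/
def down (m : ℕ) (D : Finset (ℕ × ℕ)) : Finset (ℕ × ℕ) :=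
  (D.erase (1, m)).image (fpair m)

lemma gmap_lt {m x y : ℕ} (h : x < y) : gmap m x < gmap m y := by
  unfold gmap; split_ifs <;> omega

lemma gmap_ne_one {m y : ℕ} (hy : 1 ≤ y) : gmap m y ≠ 1 := by
  unfold gmap; split_ifs <;> omega

lemma gmap_ne_m {m y : ℕ} : gmap m y ≠ m := by
  unfold gmap; split_ifs <;> omega

lemma gmap_inj {m x y : ℕ} (h : gmap m x = gmap m y) : x = y := by
  unfold gmap at h; split_ifs at h <;> omega

lemma fmap_gmap {m y : ℕ} : fmap m (gmap m y) = y := by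
  unfold gmap fmap; split_ifs <;> omega

lemma gmap_fmap {m x : ℕ} (hm : 3 ≤ m) (hx : 2 ≤ x) (hxm : x ≠ m) :
    gmap m (fmap m x) = x := by
  unfold gmap fmap; split_ifs <;> omega

lemma fmap_lt {m x y : ℕ} (hx : 2 ≤ x) (h : x < y) (hxm : x ≠ m) (hym : y ≠ m) :
    fmap m x < fmap m y := by
  unfold fmap; split_ifs <;> omega

lemma gmap_bounds {N m y : ℕ} (hm3 : 3 ≤ m) (hm : m ≤ 2 * N + 1)
    (hy1 : 1 ≤ y) (hy2 : y ≤ 2 * N) : 2 ≤ gmap m y ∧ gmap m y ≤ 2 * N + 2 := by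
  unfold gmap; split_ifs <;> omega

lemma gmap_top {N m : ℕ} (hm : m ≤ 2 * N + 1) (hN : 1 ≤ N) :
    gmap m (2 * N) = 2 * N + 2 := by
  unfold gmap; split_ifs <;> omega

lemma fmap_bounds {N m x : ℕ} (hm3 : 3 ≤ m) (hm : m ≤ 2 * N + 1)
    (hx1 : 2 ≤ x) (hx2 : x ≤ 2 * N + 2) (hxm : x ≠ m) :
    1 ≤ fmap m x ∧ fmap m x ≤ 2 * N := by
  unfold fmap; split_ifs <;> omega

lemma crosses_gpair {m : ℕ} {p q : ℕ × ℕ} (h : crosses p q) :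
    crosses (gpair m p) (gpair m q) :=
  ⟨gmap_lt h.1, gmap_lt h.2.1, gmap_lt h.2.2⟩

lemma points_image {φ : ℕ → ℕ} {M : Finset (ℕ × ℕ)} :
    points (M.image fun p => (φ p.1, φ p.2)) = (points M).image φ := by
  ext x
  simp only [mem_points, Finset.mem_image, mem_points]
  constructor
  · rintro ⟨p, ⟨q, hq, rfl⟩, h | h⟩
    · exact ⟨q.1, ⟨q, hq, Or.inl rfl⟩, h.symm⟩
    · exact ⟨q.2, ⟨q, hq, Or.inr rfl⟩, h.symm⟩
  · rintro ⟨y, ⟨q, hq, h | h⟩, rfl⟩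
    · exact ⟨(φ q.1, φ q.2), ⟨q, hq, rfl⟩, Or.inl (by rw [h])⟩
    · exact ⟨(φ q.1, φ q.2), ⟨q, hq, rfl⟩, Or.inr (by rw [h])⟩

lemma points_insert {a : ℕ × ℕ} {M : Finset (ℕ × ℕ)} :
    points (insert a M) = insert a.1 (insert a.2 (points M)) := by
  ext x
  simp only [points, Finset.biUnion_insert, Finset.mem_union, Finset.mem_insert,
    Finset.mem_singleton, Finset.mem_biUnion]
  aesop


lemma cross_new {m c d : ℕ} (h1 : 1 ≤ c) (h2 : c ≤ m - 2) (h3 : m - 2 < d)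
    (hm : 3 ≤ m) : crosses (1, m) (gmap m c, gmap m d) := by
  simp only [crosses, gmap]; split_ifs <;> omega

lemma mem_up {m : ℕ} {M : Finset (ℕ × ℕ)} {p : ℕ × ℕ} :
    p ∈ up m M ↔ p = (1, m) ∨ ∃ q ∈ M, gpair m q = p := by
  simp [up, Finset.mem_insert, Finset.mem_image]

lemma up_good {N m : ℕ} {M : Finset (ℕ × ℕ)} (hN : 1 ≤ N) (hm3 : 3 ≤ m)
    (hm : m ≤ 2 * N + 1) (hg : Good N M) : Good (N + 1) (up m M) := by
  have hbd : ∀ q ∈ M, 1 ≤ q.1 ∧ q.1 < q.2 ∧ q.2 ≤ 2 * N :=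
    fun q hq => endpoint_bounds hg.1 hq
  refine ⟨⟨⟨?_, ?_⟩, ?_⟩, ?_⟩
  · -- p.1 < p.2
    intro p hp
    rcases mem_up.1 hp with rfl | ⟨q, hq, rfl⟩
    · simpa using by omega
    · exact gmap_lt (hbd q hq).2.1
  · -- distinct endpoints
    intro p hp q hq hne
    rcases mem_up.1 hp with rfl | ⟨r, hr, rfl⟩ <;>
      rcases mem_up.1 hq with rfl | ⟨s, hs, rfl⟩
    · exact absurd rfl hne
    · have hb := hbd s hs
      simp only [gpair]
      exact ⟨fun h => gmap_ne_one hb.1 h.symm, fun h => gmap_ne_one (by omega) h.symm,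
        fun h => gmap_ne_m h.symm, fun h => gmap_ne_m h.symm⟩
    · have hb := hbd r hr
      simp only [gpair]
      exact ⟨gmap_ne_one hb.1, gmap_ne_m, gmap_ne_one (by omega), gmap_ne_m⟩
    · have hrs : r ≠ s := fun h => hne (by rw [h])
      have hd := hg.1.1.2 r hr s hs hrs
      simp only [gpair]
      exact ⟨fun h => hd.1 (gmap_inj h), fun h => hd.2.1 (gmap_inj h),
        fun h => hd.2.2.1 (gmap_inj h), fun h => hd.2.2.2 (gmap_inj h)⟩
  · -- points
    have himg : M.image (gpair m) = M.image (fun p => (gmap m p.1, gmap m p.2)) := rfl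
    rw [up, points_insert, himg, points_image]
    ext x
    simp only [Finset.mem_insert, Finset.mem_image, hg.1.2, Finset.mem_Icc]
    constructor
    · rintro (rfl | rfl | ⟨y, hy, rfl⟩)
      · omega
      · omega
      · have := gmap_bounds hm3 hm hy.1 hy.2 (N := N); omega
    · intro hx
      by_cases h1 : x = 1
      · exact Or.inl h1
      by_cases h2 : x = m
      · exact Or.inr (Or.inl h2)
      · refine Or.inr (Or.inr ⟨fmap m x, ?_, gmap_fmap hm3 (by omega) h2⟩)
        have := fmap_bounds hm3 hm (x := x) (by omega) (by omega) h2
        omega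
  · -- crossing condition
    intro p hp hne
    rcases mem_up.1 hp with rfl | ⟨r, hr, rfl⟩
    · -- the new chord (1, m)
      have hy : (m - 2) ∈ points M := by rw [hg.1.2, Finset.mem_Icc]; omega
      obtain ⟨r, hr, hor⟩ := mem_points.1 hy
      have hbr := hbd r hr
      rcases hor with h1 | h2
      · exact ⟨gpair m r, mem_up.2 (Or.inr ⟨r, hr, rfl⟩),
          cross_new hbr.1 (by omega) (by omega) hm3⟩
      · have hr2 : r.2 ≠ 2 * N := by omega
        obtain ⟨s, hs, hc⟩ := hg.2 r hr hr2
        have hbs := hbd s hs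
        have hc1 := hc.1
        have hc2 := hc.2.1
        have hc3 := hc.2.2
        exact ⟨gpair m s, mem_up.2 (Or.inr ⟨s, hs, rfl⟩),
          cross_new hbs.1 (by omega) (by omega) hm3⟩
    · -- an old chord
      have hb := hbd r hr
      have hr2 : r.2 ≠ 2 * N := by
        intro h
        apply hne
        show gmap m r.2 = 2 * (N + 1)
        rw [h, gmap_top hm hN]; omega
      obtain ⟨s, hs, hc⟩ := hg.2 r hr hr2
      exact ⟨gpair m s, mem_up.2 (Or.inr ⟨s, hs, rfl⟩), crosses_gpair hc⟩

lemma erase_endpoints {N m : ℕ} {D : Finset (ℕ × ℕ)} (hd : IsDiagramOn (N + 1) D)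
    (hm1 : (1, m) ∈ D) {p : ℕ × ℕ} (hp : p ∈ D.erase (1, m)) :
    2 ≤ p.1 ∧ p.1 < p.2 ∧ p.2 ≤ 2 * N + 2 ∧ p.1 ≠ m ∧ p.2 ≠ m := by
  have hne : p ≠ (1, m) := Finset.ne_of_mem_erase hp
  have hpD : p ∈ D := Finset.mem_of_mem_erase hp
  have hb := endpoint_bounds hd hpD
  have hdis := hd.1.2 p hpD (1, m) hm1 hne
  simp only at hdis
  omega

lemma mem_down {m : ℕ} {D : Finset (ℕ × ℕ)} {p : ℕ × ℕ} :
    p ∈ down m D ↔ ∃ q ∈ D.erase (1, m), fpair m q = p := by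
  simp [down, Finset.mem_image]

lemma fmap_inj {m x y : ℕ} (hm3 : 3 ≤ m) (hx : 2 ≤ x) (hxm : x ≠ m)
    (hy : 2 ≤ y) (hym : y ≠ m) (h : fmap m x = fmap m y) : x = y := by
  have h1 := gmap_fmap hm3 hx hxm
  have h2 := gmap_fmap hm3 hy hym
  rw [← h1, ← h2, h]

lemma down_good {N m : ℕ} {D : Finset (ℕ × ℕ)} (hN : 1 ≤ N) (hm3 : 3 ≤ m)
    (hm : m ≤ 2 * N + 1) (hg : Good (N + 1) D) (hmem : (1, m) ∈ D) :
    Good N (down m D) := by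
  have hee := fun {p} (hp : p ∈ D.erase (1, m)) => erase_endpoints hg.1 hmem hp
  refine ⟨⟨⟨?_, ?_⟩, ?_⟩, ?_⟩
  · intro p hp
    obtain ⟨q, hq, rfl⟩ := mem_down.1 hp
    have h := hee hq
    exact fmap_lt h.1 h.2.1 h.2.2.2.1 h.2.2.2.2
  · intro p hp q hq hne
    obtain ⟨r, hr, rfl⟩ := mem_down.1 hp
    obtain ⟨s, hs, rfl⟩ := mem_down.1 hq
    have hbr := hee hr
    have hbs := hee hs
    have hrs : r ≠ s := fun h => hne (by rw [h])
    have hd := hg.1.1.2 r (Finset.mem_of_mem_erase hr) s (Finset.mem_of_mem_erase hs) hrs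
    simp only [fpair]
    exact ⟨fun h => hd.1 (fmap_inj hm3 hbr.1 hbr.2.2.2.1 hbs.1 hbs.2.2.2.1 h),
      fun h => hd.2.1 (fmap_inj hm3 hbr.1 hbr.2.2.2.1 (by omega) hbs.2.2.2.2 h),
      fun h => hd.2.2.1 (fmap_inj hm3 (by omega) hbr.2.2.2.2 hbs.1 hbs.2.2.2.1 h),
      fun h => hd.2.2.2 (fmap_inj hm3 (by omega) hbr.2.2.2.2 (by omega) hbs.2.2.2.2 h)⟩
  · -- points of down
    have himg : (D.erase (1, m)).image (fpair m)
        = (D.erase (1, m)).image (fun p => (fmap m p.1, fmap m p.2)) := rfl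
    have hpe : ∀ y : ℕ, y ∈ points (D.erase (1, m)) ↔
        (2 ≤ y ∧ y ≤ 2 * N + 2 ∧ y ≠ m) := by
      intro y
      constructor
      · intro hy
        obtain ⟨p, hp, hor⟩ := mem_points.1 hy
        have h := hee hp
        rcases hor with rfl | rfl <;> omega
      · intro hy
        have hyD : y ∈ points D := by rw [hg.1.2, Finset.mem_Icc]; omega
        obtain ⟨p, hp, hor⟩ := mem_points.1 hyD
        have hpne : p ≠ (1, m) := by
          rintro rfl
          simp only at hor
          omega
        exact mem_points.2 ⟨p, Finset.mem_erase.2 ⟨hpne, hp⟩, hor⟩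
    rw [down, himg, points_image]
    ext x
    simp only [Finset.mem_image, hpe, Finset.mem_Icc]
    constructor
    · rintro ⟨y, hy, rfl⟩
      exact fmap_bounds hm3 hm hy.1 hy.2.1 hy.2.2
    · intro hx
      refine ⟨gmap m x, ?_, fmap_gmap⟩
      have := gmap_bounds hm3 hm hx.1 hx.2 (N := N)
      exact ⟨this.1, this.2, gmap_ne_m⟩
  · -- crossing condition
    intro p hp hne
    obtain ⟨q, hq, rfl⟩ := mem_down.1 hp
    have hbq := hee hq
    have hq2 : q.2 ≠ 2 * (N + 1) := by
      intro h
      apply hne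
      show fmap m q.2 = 2 * N
      rw [h]
      unfold fmap; split_ifs <;> omega
    obtain ⟨s, hs, hc⟩ := hg.2 q (Finset.mem_of_mem_erase hq) hq2
    have hsne : s ≠ (1, m) := by
      intro h
      have := hc.1
      rw [h] at this
      omega
    have hsE : s ∈ D.erase (1, m) := Finset.mem_erase.2 ⟨hsne, hs⟩
    have hbs := hee hsE
    refine ⟨fpair m s, mem_down.2 ⟨s, hsE, rfl⟩, ?_⟩
    exact ⟨fmap_lt hbq.1 hc.1 hbq.2.2.2.1 hbs.2.2.2.1,
      fmap_lt hbs.1 hc.2.1 hbs.2.2.2.1 hbq.2.2.2.2,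
      fmap_lt (by omega) hc.2.2 hbq.2.2.2.2 hbs.2.2.2.2⟩

lemma up_down {N m : ℕ} {D : Finset (ℕ × ℕ)} (hm3 : 3 ≤ m)
    (hd : IsDiagramOn (N + 1) D) (hmem : (1, m) ∈ D) : up m (down m D) = D := by
  rw [up, down, Finset.image_image]
  have h1 : (D.erase (1, m)).image (gpair m ∘ fpair m) = D.erase (1, m) := by
    rw [Finset.image_congr (g := id), Finset.image_id]
    intro p hp
    have h := erase_endpoints hd hmem hp
    simp only [Function.comp, gpair, fpair, id]
    have e1 := gmap_fmap hm3 h.1 h.2.2.2.1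
    have e2 := gmap_fmap hm3 (x := p.2) (by omega) h.2.2.2.2
    rw [e1, e2]
  rw [h1, Finset.insert_erase hmem]

lemma down_up {N m : ℕ} {M : Finset (ℕ × ℕ)} (hg : IsDiagramOn N M) :
    down m (up m M) = M := by
  have hnot : (1, m) ∉ M.image (gpair m) := by
    intro h
    obtain ⟨q, hq, hqe⟩ := Finset.mem_image.1 h
    have hb := endpoint_bounds hg hq
    exact gmap_ne_one hb.1 (congrArg Prod.fst hqe)
  rw [down, up, Finset.erase_insert hnot, Finset.image_image]
  rw [Finset.image_congr (g := id), Finset.image_id]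
  intro p hp
  simp only [Function.comp, fpair, gpair, id, fmap_gmap]

lemma exists_chord_one {n : ℕ} {D : Finset (ℕ × ℕ)} (hd : IsDiagramOn n D)
    (hn : 1 ≤ n) : ∃ m, (1, m) ∈ D := by
  have h1 : (1 : ℕ) ∈ points D := by rw [hd.2, Finset.mem_Icc]; omega
  obtain ⟨p, hp, hor⟩ := mem_points.1 h1
  have hb := endpoint_bounds hd hp
  have : p.1 = 1 := by rcases hor with h | h <;> omega
  exact ⟨p.2, by rwa [← this, Prod.mk.eta]⟩

lemma chord_one_ge {N m : ℕ} {D : Finset (ℕ × ℕ)} (hN : 1 ≤ N)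
    (hg : Good (N + 1) D) (hm : (1, m) ∈ D) : 3 ≤ m := by
  have hb := endpoint_bounds hg.1 hm
  simp only at hb
  by_contra hlt
  have hm2 : m = 2 := by omega
  subst hm2
  obtain ⟨q, hq, hc⟩ := hg.2 (1, 2) hm (by omega)
  have := hc.1
  have := hc.2.1
  simp only at this ⊢
  omega

lemma chord_one_le {N m : ℕ} {D : Finset (ℕ × ℕ)} (hN : 1 ≤ N)
    (hg : Good (N + 1) D) (hm : (1, m) ∈ D) : m ≤ 2 * N + 1 := by
  have hb := endpoint_bounds hg.1 hm
  simp only at hb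
  by_contra hlt
  have hm2 : m = 2 * N + 2 := by omega
  subst hm2
  -- the erase of the top chord is nonempty
  have h2 : (2 : ℕ) ∈ points D := by rw [hg.1.2, Finset.mem_Icc]; omega
  obtain ⟨r, hr, hor⟩ := mem_points.1 h2
  have hrne : r ≠ (1, 2 * N + 2) := by
    rintro rfl
    simp only at hor
    omega
  have hE : (D.erase (1, 2 * N + 2)).Nonempty :=
    ⟨r, Finset.mem_erase.2 ⟨hrne, hr⟩⟩
  obtain ⟨q, hq, hmax⟩ := Finset.exists_max_image (D.erase (1, 2 * N + 2)) Prod.snd hE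
  have hqD := Finset.mem_of_mem_erase hq
  have hq2 : q.2 ≠ 2 * (N + 1) := by
    intro h
    have : q = (1, 2 * N + 2) := top_unique hg.1 hqD hm (by simpa using by omega)
    exact Finset.ne_of_mem_erase hq this
  obtain ⟨s, hs, hc⟩ := hg.2 q hqD hq2
  have hbq := endpoint_bounds hg.1 hqD
  have hsne : s ≠ (1, 2 * N + 2) := by
    intro h
    have := hc.1
    rw [h] at this
    omega
  have hsE : s ∈ D.erase (1, 2 * N + 2) := Finset.mem_erase.2 ⟨hsne, hs⟩
  have := hmax s hsE
  have := hc.2.2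
  omega


lemma good_finite (n : ℕ) : {D : Finset (ℕ × ℕ) | Good n D}.Finite := by
  apply Set.Finite.subset
    (Finset.finite_toSet ((Finset.Icc 1 (2 * n) ×ˢ Finset.Icc 1 (2 * n)).powerset))
  intro D hD
  simp only [Finset.coe_powerset, Set.mem_preimage, Set.mem_powerset_iff,
    Finset.coe_subset, Finset.mem_coe, Set.mem_setOf_eq] at *
  intro p hp
  have hb := endpoint_bounds hD.1 hp
  rw [Finset.mem_product, Finset.mem_Icc, Finset.mem_Icc]
  omega

lemma good_one : {D : Finset (ℕ × ℕ) | Good 1 D} = {({(1, 2)} : Finset (ℕ × ℕ))} := by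
  ext D
  simp only [Set.mem_setOf_eq, Set.mem_singleton_iff]
  constructor
  · intro hg
    obtain ⟨m, hm⟩ := exists_chord_one hg.1 le_rfl
    rw [Finset.eq_singleton_iff_unique_mem]
    have key : ∀ p ∈ D, p = (1, 2) := by
      intro p hp
      have hb := endpoint_bounds hg.1 hp
      have : p.1 = 1 ∧ p.2 = 2 := by omega
      exact Prod.ext this.1 this.2
    exact ⟨by rw [← key (1, m) hm]; exact hm, key⟩
  · rintro rfl
    refine ⟨⟨⟨?_, ?_⟩, ?_⟩, ?_⟩
    · intro p hp
      rw [Finset.mem_singleton] at hp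
      subst hp; omega
    · intro p hp q hq hne
      rw [Finset.mem_singleton] at hp hq
      exact absurd (hp.trans hq.symm) hne
    · decide
    · intro p hp hne
      rw [Finset.mem_singleton] at hp
      subst hp
      exact absurd rfl hne

lemma good_card_succ (N : ℕ) (hN : 1 ≤ N) :
    {D : Finset (ℕ × ℕ) | Good (N + 1) D}.ncard
      = (2 * N - 1) * {M : Finset (ℕ × ℕ) | Good N M}.ncard := by
  set S : Set ℕ := Set.Icc 3 (2 * N + 1) with hS
  set T : Set (Finset (ℕ × ℕ)) := {M | Good N M} with hT
  set U : ℕ × Finset (ℕ × ℕ) → Finset (ℕ × ℕ) := fun q => up q.1 q.2 with hU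
  have himage : U '' (S ×ˢ T) = {D : Finset (ℕ × ℕ) | Good (N + 1) D} := by
    ext D
    constructor
    · rintro ⟨⟨m, M⟩, ⟨hmS, hMT⟩, rfl⟩
      rw [Set.mem_Icc] at hmS
      exact up_good hN hmS.1 hmS.2 hMT
    · intro hD
      obtain ⟨m, hm⟩ := exists_chord_one hD.1 (by omega)
      have hm3 := chord_one_ge hN hD hm
      have hmle := chord_one_le hN hD hm
      exact ⟨(m, down m D), ⟨Set.mem_Icc.2 ⟨hm3, hmle⟩,
        down_good hN hm3 hmle hD hm⟩, up_down hm3 hD.1 hm⟩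
  have hinj : Set.InjOn U (S ×ˢ T) := by
    rintro ⟨m, M⟩ ⟨hmS, hMT⟩ ⟨m', M'⟩ ⟨hmS', hMT'⟩ heq
    simp only [hU] at heq
    have hmm : m = m' := by
      have h1 : (1, m) ∈ up m' M' := by rw [← heq]; exact mem_up.2 (Or.inl rfl)
      rcases mem_up.1 h1 with h | ⟨q, hq, hqe⟩
      · exact (Prod.mk.injEq _ _ _ _ ▸ h).2
      · have hb := endpoint_bounds hMT'.1 hq
        exact absurd (congrArg Prod.fst hqe) (gmap_ne_one hb.1)
    subst hmm
    have : M = M' := by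
      have e1 : down m (up m M) = M := down_up hMT.1
      have e2 : down m (up m M') = M' := down_up hMT'.1
      rw [← e1, ← e2, heq]
    rw [this]
  have hprod : (S ×ˢ T).ncard = S.ncard * T.ncard := by
    rw [← Nat.card_coe_set_eq S, ← Nat.card_coe_set_eq T, ← Nat.card_coe_set_eq (S ×ˢ T),
      Nat.card_congr (Equiv.Set.prod S T), Nat.card_prod]
  have hScard : S.ncard = 2 * N - 1 := by
    rw [hS, ← Finset.coe_Icc, Set.ncard_coe_finset, Nat.card_Icc]
    omega
  rw [← himage, Set.ncard_image_of_injOn hinj, hprod, hScard]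

lemma good_card (n : ℕ) (hn : 1 ≤ n) :
    {D : Finset (ℕ × ℕ) | Good n D}.ncard
      = ∏ i ∈ Finset.range (n - 1), (2 * i + 1) := by
  induction n, hn using Nat.le_induction with
  | base => rw [good_one]; simp
  | succ n hn ih =>
    rw [good_card_succ n hn, ih]
    obtain ⟨k, rfl⟩ : ∃ k, n = k + 1 := ⟨n - 1, by omega⟩
    have h1 : k + 1 + 1 - 1 = k + 1 := by omega
    have h2 : k + 1 - 1 = k := by omega
    have h3 : 2 * (k + 1) - 1 = 2 * k + 1 := by omega
    rw [h1, h2, h3, Finset.prod_range_succ, mul_comm]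

/-- the number of connected chord diagrams with `n` chords having exactly
one terminal chord is `(2n-3)!! = 1·3·5⋯(2n-3)` (with `(-1)!! = 1`). -/
theorem stmt6 (n : ℕ) (hn : 1 ≤ n) :
    Set.ncard {D : Finset (ℕ × ℕ) |
        IsDiagramOn n D ∧ ConnectedDiagram D ∧ ∃! p, IsTerminal D p}
      = ∏ i ∈ Finset.range (n - 1), (2 * i + 1) := by
  rw [set_eq_good n hn]
  exact good_card n hn

end ChordStmt
end
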